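/- arXiv:2101.05482 — 15 statements merged into one kernel-verified Lean document; each statement's English description precedes it below -/
import Mathlib

section
/- Let X be a real Hilbert space, M ⊆ X a nonempty closed convex set, J : X → ℝ Fréchet differentiable, and suppose the descent condition J(x) − J(x₊) − ⟨∇J(x), x − x₊⟩ ≥ −(L/2)‖x − x₊‖² holds for all x, x₊ ∈ M, where L > 0. If x_k ∈ M, μ_k > 0, and x_{k+1} = P_M(x_k − μ_k ∇J(x_k)), then J(x_k) − J(x_{k+1}) ≥ (1/μ_k − L/2)‖x_{k+1} − x_k‖². -/
open RealInnerProductSpace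

/-- Descent of the cost in one projected gradient step, under the Lipschitz-type
condition `J(x) - J(xp) - ⟪∇J(x), x - xp⟫ ≥ -(L/2)‖x - xp‖²` on `M`. -/
theorem projected_gradient_step_descent
    {X : Type*} [NormedAddCommGroup X] [InnerProductSpace ℝ X] [CompleteSpace X]
    (M : Set X) (hMne : M.Nonempty) (hMcl : IsClosed M) (hMconv : Convex ℝ M)
    (J : X → ℝ) (hJ : Differentiable ℝ J) (L : ℝ) (hL : 0 < L)
    (hLip : ∀ x ∈ M, ∀ xp ∈ M,
      J x - J xp - ⟪gradient J x, x - xp⟫ ≥ -(L / 2) * ‖x - xp‖ ^ 2)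
    (xk : X) (hxk : xk ∈ M) (μ : ℝ) (hμ : 0 < μ)
    (x1 : X) (hx1 : x1 ∈ M)
    (hproj : ∀ z ∈ M, ⟪(xk - μ • gradient J xk) - x1, z - x1⟫ ≤ 0) :
    J xk - J x1 ≥ (1 / μ - L / 2) * ‖x1 - xk‖ ^ 2 := by
  have h1 := hproj xk hxk
  have h2 := hLip xk hxk x1 hx1
  have hexp : ⟪(xk - μ • gradient J xk) - x1, xk - x1⟫
      = ‖xk - x1‖ ^ 2 - μ * ⟪gradient J xk, xk - x1⟫ := by
    have : (xk - μ • gradient J xk) - x1 = (xk - x1) - μ • gradient J xk := by abel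
    rw [this, inner_sub_left, real_inner_smul_left, real_inner_self_eq_norm_sq]
  have hineq : ‖xk - x1‖ ^ 2 ≤ μ * ⟪gradient J xk, xk - x1⟫ := by
    rw [hexp] at h1; linarith
  have hinner : ⟪gradient J xk, xk - x1⟫ ≥ (1 / μ) * ‖xk - x1‖ ^ 2 := by
    rw [ge_iff_le, div_mul_eq_mul_div, div_le_iff₀ hμ]
    linarith [mul_comm μ ⟪gradient J xk, xk - x1⟫]
  have hnorm : ‖x1 - xk‖ = ‖xk - x1‖ := norm_sub_rev _ _
  rw [hnorm]
  nlinarith [sq_nonneg ‖xk - x1‖]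
end

section
/- Let X be a real Hilbert space, M ⊆ X a nonempty closed convex set, J : X → ℝ Fréchet differentiable with J ≥ 0 on M, and suppose J(x) − J(x₊) − ⟨∇J(x), x − x₊⟩ ≥ −(L/2)‖x − x₊‖² for all x, x₊ ∈ M, where L > 0. Let (x_k)_{k≥0} ⊆ M be generated by the projected gradient iteration x_{k+1} = P_M(x_k − μ_k ∇J(x_k)) with stepsizes 0 < μ_k ≤ μ̄ < 2/L. Then ∑_{k=0}^∞ ‖x_{k+1} − x_k‖² ≤ J(x_0) / (1/μ̄ − L/2). -/
open RealInnerProductSpace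

/-- Square summability of the steps of the projected gradient method with
stepsizes `0 < μ_k ≤ μ̄ < 2/L`:
`∑_{k=0}^∞ ‖x_{k+1} - x_k‖² ≤ J(x_0) / (1/μ̄ - L/2)`. -/
theorem projected_gradient_square_summability
    {X : Type*} [NormedAddCommGroup X] [InnerProductSpace ℝ X] [CompleteSpace X]
    (M : Set X) (hMne : M.Nonempty) (hMcl : IsClosed M) (hMconv : Convex ℝ M)
    (J : X → ℝ) (hJ : Differentiable ℝ J) (hJnonneg : ∀ x ∈ M, 0 ≤ J x)
    (L : ℝ) (hL : 0 < L)
    (hLip : ∀ x ∈ M, ∀ xp ∈ M,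
      J x - J xp - ⟪gradient J x, x - xp⟫ ≥ -(L / 2) * ‖x - xp‖ ^ 2)
    (x : ℕ → X) (hxM : ∀ k, x k ∈ M)
    (μ : ℕ → ℝ) (μbar : ℝ) (hμpos : ∀ k, 0 < μ k) (hμbar : ∀ k, μ k ≤ μbar)
    (hμbarL : μbar < 2 / L)
    (hproj : ∀ k, ∀ z ∈ M,
      ⟪(x k - μ k • gradient J (x k)) - x (k + 1), z - x (k + 1)⟫ ≤ 0) :
    Summable (fun k => ‖x (k + 1) - x k‖ ^ 2) ∧
      ∑' k, ‖x (k + 1) - x k‖ ^ 2 ≤ J (x 0) / (1 / μbar - L / 2) := by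

  have hμbarpos : 0 < μbar := lt_of_lt_of_le (hμpos 0) (hμbar 0)
  set c : ℝ := 1 / μbar - L / 2 with hc
  have hcpos : 0 < c := by
    have h1 : 1 / (2 / L) < 1 / μbar := one_div_lt_one_div_of_lt hμbarpos hμbarL
    have h2 : 1 / (2 / L) = L / 2 := by
      rw [one_div_div]
    rw [hc]; linarith
  have key : ∀ k, c * ‖x (k + 1) - x k‖ ^ 2 ≤ J (x k) - J (x (k + 1)) := by
    intro k
    have hp := hproj k (x k) (hxM k)
    set g := gradient J (x k) with hg
    set d := x k - x (k + 1) with hd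
    have hp1 : ‖d‖ ^ 2 ≤ μ k * ⟪g, d⟫ := by
      have heq : ⟪d - μ k • g, d⟫ ≤ 0 := by
        have : (x k - μ k • g) - x (k + 1) = d - μ k • g := by rw [hd]; abel
        rw [this] at hp
        exact hp
      rw [inner_sub_left, real_inner_smul_left] at heq
      have hself : ⟪d, d⟫ = ‖d‖ ^ 2 := real_inner_self_eq_norm_sq d
      linarith
    have hgd : 0 ≤ ⟪g, d⟫ := by
      nlinarith [sq_nonneg ‖d‖, hμpos k]
    have hp2 : ‖d‖ ^ 2 ≤ μbar * ⟪g, d⟫ :=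
      hp1.trans (mul_le_mul_of_nonneg_right (hμbar k) hgd)
    have hp3 : ‖d‖ ^ 2 / μbar ≤ ⟪g, d⟫ := (div_le_iff₀' hμbarpos).mpr hp2
    have hlip := hLip (x k) (hxM k) (x (k + 1)) (hxM (k + 1))
    have hnorm : ‖x (k + 1) - x k‖ = ‖d‖ := by rw [hd, norm_sub_rev]
    have hdivd : ‖d‖ ^ 2 / μbar = (1 / μbar) * ‖d‖ ^ 2 := by ring
    rw [hnorm, hc]
    rw [hdivd] at hp3
    have : J (x k) - J (x (k + 1)) - ⟪g, d⟫ ≥ -(L / 2) * ‖d‖ ^ 2 := hlip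
    nlinarith
  have hsum : ∀ n, ∑ k ∈ Finset.range n, ‖x (k + 1) - x k‖ ^ 2 ≤ J (x 0) / c := by
    intro n
    have htel : ∑ k ∈ Finset.range n, (J (x k) - J (x (k + 1))) = J (x 0) - J (x n) :=
      Finset.sum_range_sub' (fun k => J (x k)) n
    have hbd : c * ∑ k ∈ Finset.range n, ‖x (k + 1) - x k‖ ^ 2 ≤ J (x 0) - J (x n) := by
      rw [← htel, Finset.mul_sum]
      exact Finset.sum_le_sum fun k _ => key k
    have hJn := hJnonneg (x n) (hxM n)
    rw [le_div_iff₀ hcpos]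
    nlinarith
  have hsummable : Summable (fun k => ‖x (k + 1) - x k‖ ^ 2) :=
    summable_of_sum_range_le (fun k => sq_nonneg _) hsum
  exact ⟨hsummable, Summable.tsum_le_of_sum_range_le hsummable hsum⟩
end

section
/- Let X be a real Hilbert space, M ⊆ X a nonempty closed convex set, J : X → ℝ Fréchet differentiable, x† ∈ M, γ > 0, η ≥ 0 and τ > 1/γ. Assume the convexity-type condition ⟨∇J(x) − ∇J(x†), x − x†⟩ ≥ γ‖∇J(x)‖² for all x ∈ M, and the approximate stationarity condition ⟨∇J(x†), x − x†⟩ ≥ −η for all x ∈ M. Let x_k ∈ M satisfy ‖∇J(x_k)‖² ≥ τη, let 0 < μ_k ≤ 2γ − 2/τ, and set x_{k+1} = P_M(x_k − μ_k ∇J(x_k)). Then ‖x_{k+1} − x†‖² − ‖x_k − x†‖² ≤ −μ_k(2γ − μ_k − 2/τ)‖∇J(x_k)‖² ≤ 0. -/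
open RealInnerProductSpace

/-- Monotonicity of the error for one projected gradient step under the
convexity-type condition `⟪∇J(x) - ∇J(x†), x - x†⟫ ≥ γ‖∇J(x)‖²` and
approximate stationarity `⟪∇J(x†), x - x†⟫ ≥ -η` on `M`, before the
discrepancy principle is triggered (`‖∇J(x_k)‖² ≥ τη`). -/
theorem projected_gradient_step_error_monotonicity
    {X : Type*} [NormedAddCommGroup X] [InnerProductSpace ℝ X] [CompleteSpace X]
    (M : Set X) (hMne : M.Nonempty) (hMcl : IsClosed M) (hMconv : Convex ℝ M)
    (J : X → ℝ) (hJ : Differentiable ℝ J)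
    (xdag : X) (hxdag : xdag ∈ M)
    (γ η τ : ℝ) (hγ : 0 < γ) (hη : 0 ≤ η) (hτ : 1 / γ < τ)
    (hconvex : ∀ x ∈ M,
      ⟪gradient J x - gradient J xdag, x - xdag⟫ ≥ γ * ‖gradient J x‖ ^ 2)
    (hstat : ∀ x ∈ M, ⟪gradient J xdag, x - xdag⟫ ≥ -η)
    (xk : X) (hxk : xk ∈ M)
    (hdisc : ‖gradient J xk‖ ^ 2 ≥ τ * η)
    (μ : ℝ) (hμpos : 0 < μ) (hμle : μ ≤ 2 * γ - 2 / τ)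
    (x1 : X) (hx1 : x1 ∈ M)
    (hproj : ∀ z ∈ M, ⟪(xk - μ • gradient J xk) - x1, z - x1⟫ ≤ 0) :
    ‖x1 - xdag‖ ^ 2 - ‖xk - xdag‖ ^ 2 ≤
        -μ * (2 * γ - μ - 2 / τ) * ‖gradient J xk‖ ^ 2 ∧
      -μ * (2 * γ - μ - 2 / τ) * ‖gradient J xk‖ ^ 2 ≤ 0 := by

  have hτ0 : 0 < τ := lt_trans (by positivity) hτ
  set g := gradient J xk with hg
  have hηle : τ * η ≤ ‖g‖ ^ 2 := hdisc
  have hp := hproj xdag hxdag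
  have key1 : ‖x1 - xdag‖ ^ 2 ≤ ‖(xk - μ • g) - xdag‖ ^ 2 := by
    have hexp : (xk - μ • g) - xdag = ((xk - μ • g) - x1) + (x1 - xdag) := by abel
    rw [hexp, norm_add_sq_real]
    have : ⟪(xk - μ • g) - x1, x1 - xdag⟫ ≥ 0 := by
      have : ⟪(xk - μ • g) - x1, x1 - xdag⟫ = -⟪(xk - μ • g) - x1, xdag - x1⟫ := by
        rw [← inner_neg_right]; congr 1; abel
      rw [this]; linarith
    nlinarith [sq_nonneg ‖(xk - μ • g) - x1‖]
  have key2 : ‖(xk - μ • g) - xdag‖ ^ 2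
      = ‖xk - xdag‖ ^ 2 - 2 * μ * ⟪g, xk - xdag⟫ + μ ^ 2 * ‖g‖ ^ 2 := by
    have hexp : (xk - μ • g) - xdag = (xk - xdag) - μ • g := by abel
    rw [hexp, norm_sub_sq_real, inner_smul_right, norm_smul, real_inner_comm]
    simp [mul_pow, abs_of_pos hμpos]
    ring
  have key3 : ⟪g, xk - xdag⟫ ≥ γ * ‖g‖ ^ 2 - ‖g‖ ^ 2 / τ := by
    have h1 := hconvex xk hxk
    have h2 := hstat xk hxk
    rw [inner_sub_left] at h1
    have : η ≤ ‖g‖ ^ 2 / τ := (le_div_iff₀ hτ0).2 (by linarith [mul_comm τ η])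
    linarith
  have hmul := mul_le_mul_of_nonneg_left key3 hμpos.le
  have hid : -μ * (2 * γ - μ - 2 / τ) * ‖g‖ ^ 2
      = -2 * (μ * (γ * ‖g‖ ^ 2 - ‖g‖ ^ 2 / τ)) + μ ^ 2 * ‖g‖ ^ 2 := by
    field_simp; ring
  constructor
  · linarith
  · have h2γ : 0 ≤ 2 * γ - μ - 2 / τ := by linarith
    have := mul_nonneg (mul_nonneg hμpos.le h2γ) (sq_nonneg ‖g‖)
    nlinarith
end

section
/- Let X be a real Hilbert space, M ⊆ X a nonempty closed convex set, J : X → ℝ Fréchet differentiable, x† ∈ M, γ > 0, η ≥ 0 and τ > 1/γ. Assume ⟨∇J(x) − ∇J(x†), x − x†⟩ ≥ γ‖∇J(x)‖² for all x ∈ M and ⟨∇J(x†), x − x†⟩ ≥ −η for all x ∈ M. Let (x_k)_{0 ≤ k ≤ N} ⊆ M be generated by x_{k+1} = P_M(x_k − μ_k ∇J(x_k)) with stepsizes 0 < μ̲ ≤ μ_k ≤ μ̄ < 2(γ − 1/τ), and assume ‖∇J(x_k)‖² ≥ τη for all k ≤ N − 1. Then ∑_{k=0}^{N−1} ‖∇J(x_k)‖²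 ≤ ‖x_0 − x†‖² / (μ̲(2γ − μ̄ − 2/τ)). -/
open RealInnerProductSpace

/-- Summability estimate for the projected gradient method under the
convexity-type condition and approximate stationarity:
`∑_{k=0}^{N-1} ‖∇J(x_k)‖² ≤ ‖x_0 - x†‖² / (μ̲(2γ - μ̄ - 2/τ))`. -/
theorem projected_gradient_gradient_summability
    {X : Type*} [NormedAddCommGroup X] [InnerProductSpace ℝ X] [CompleteSpace X]
    (M : Set X) (hMne : M.Nonempty) (hMcl : IsClosed M) (hMconv : Convex ℝ M)
    (J : X → ℝ) (hJ : Differentiable ℝ J)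
    (xdag : X) (hxdag : xdag ∈ M)
    (γ η τ : ℝ) (hγ : 0 < γ) (hη : 0 ≤ η) (hτ : 1 / γ < τ)
    (hconvex : ∀ x ∈ M,
      ⟪gradient J x - gradient J xdag, x - xdag⟫ ≥ γ * ‖gradient J x‖ ^ 2)
    (hstat : ∀ x ∈ M, ⟪gradient J xdag, x - xdag⟫ ≥ -η)
    (N : ℕ) (x : ℕ → X) (hxM : ∀ k ≤ N, x k ∈ M)
    (μ : ℕ → ℝ) (μlo μhi : ℝ) (hμlo : 0 < μlo)
    (hμ : ∀ k < N, μlo ≤ μ k ∧ μ k ≤ μhi) (hμhi : μhi < 2 * (γ - 1 / τ))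
    (hproj : ∀ k < N, ∀ z ∈ M,
      ⟪(x k - μ k • gradient J (x k)) - x (k + 1), z - x (k + 1)⟫ ≤ 0)
    (hdisc : ∀ k < N, ‖gradient J (x k)‖ ^ 2 ≥ τ * η) :
    ∑ k ∈ Finset.range N, ‖gradient J (x k)‖ ^ 2 ≤
      ‖x 0 - xdag‖ ^ 2 / (μlo * (2 * γ - μhi - 2 / τ)) := by
  have hτ0 : 0 < τ := lt_trans (by positivity) hτ
  set c : ℝ := μlo * (2 * γ - μhi - 2 / τ) with hc
  have hchi : 0 < 2 * γ - μhi - 2 / τ := by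
    have h1 : 1 < τ * γ := (div_lt_iff₀ hγ).mp hτ
    have h2 : 1 / τ < γ := by rw [div_lt_iff₀ hτ0]; nlinarith
    have h3 : 2 / τ = 2 * (1 / τ) := by ring
    linarith
  have hcpos : 0 < c := mul_pos hμlo hchi
  -- per-step estimate
  have key : ∀ k < N, c * ‖gradient J (x k)‖ ^ 2 ≤
      ‖x k - xdag‖ ^ 2 - ‖x (k+1) - xdag‖ ^ 2 := by
    intro k hk
    set g := gradient J (x k) with hg
    have hxkM : x k ∈ M := hxM k hk.le
    have hxk1M : x (k+1) ∈ M := hxM (k+1) hk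
    have hVI := hproj k hk xdag hxdag
    -- ‖d_{k+1}‖² ≤ ⟪x k - μ k • g - xdag, x (k+1) - xdag⟫
    have h1 : ‖x (k+1) - xdag‖ ^ 2 ≤ ⟪(x k - μ k • g) - xdag, x (k+1) - xdag⟫ := by
      have hexp : ⟪(x k - μ k • g) - x (k+1), xdag - x (k+1)⟫
          = -⟪(x k - μ k • g) - xdag, x (k+1) - xdag⟫ + ‖x (k+1) - xdag‖ ^ 2 := by
        have e1 : (x k - μ k • g) - x (k+1) = ((x k - μ k • g) - xdag) - (x (k+1) - xdag) := by
          abel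
        have e2 : xdag - x (k+1) = -(x (k+1) - xdag) := by abel
        rw [e1, e2, inner_sub_left, inner_neg_right, inner_neg_right,
          real_inner_self_eq_norm_sq]
        ring
      rw [hexp] at hVI; linarith
    have hcs : ⟪(x k - μ k • g) - xdag, x (k+1) - xdag⟫ ≤
        (‖(x k - μ k • g) - xdag‖ ^ 2 + ‖x (k+1) - xdag‖ ^ 2) / 2 := by
      have := real_inner_le_norm ((x k - μ k • g) - xdag) (x (k+1) - xdag)
      nlinarith [sq_nonneg (‖(x k - μ k • g) - xdag‖ - ‖x (k+1) - xdag‖)]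
    have h2 : ‖x (k+1) - xdag‖ ^ 2 ≤ ‖(x k - μ k • g) - xdag‖ ^ 2 := by linarith
    -- expand the square
    have hexp2 : ‖(x k - μ k • g) - xdag‖ ^ 2
        = ‖x k - xdag‖ ^ 2 - 2 * μ k * ⟪g, x k - xdag⟫ + μ k ^ 2 * ‖g‖ ^ 2 := by
      have e : (x k - μ k • g) - xdag = (x k - xdag) - μ k • g := by abel
      rw [e, @norm_sub_sq_real, inner_smul_right, norm_smul, real_inner_comm,
        mul_pow]
      simp [Real.norm_eq_abs, sq_abs]
      ring
    -- lower bound for the inner product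
    have hip : ⟪g, x k - xdag⟫ ≥ γ * ‖g‖ ^ 2 - η := by
      have h3 := hconvex (x k) hxkM
      have h4 := hstat (x k) hxkM
      rw [inner_sub_left] at h3
      linarith
    have hηg : η ≤ ‖g‖ ^ 2 / τ := by
      have := hdisc k hk
      rw [le_div_iff₀ hτ0]; linarith
    obtain ⟨hμ1, hμ2⟩ := hμ k hk
    have hμpos : 0 < μ k := lt_of_lt_of_le hμlo hμ1
    have hG : (0:ℝ) ≤ ‖g‖ ^ 2 := by positivity
    have hηG : 2 * μ k * η ≤ 2 * μ k * (‖g‖ ^ 2 / τ) := by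
      apply mul_le_mul_of_nonneg_left hηg; linarith
    have hmain : c * ‖g‖ ^ 2 ≤ 2 * μ k * ⟪g, x k - xdag⟫ - μ k ^ 2 * ‖g‖ ^ 2 := by
      have step : c * ‖g‖ ^ 2 ≤ μ k * (2 * γ - 2 / τ - μ k) * ‖g‖ ^ 2 := by
        apply mul_le_mul_of_nonneg_right _ hG
        have h5 : 2 * γ - μhi - 2 / τ ≤ 2 * γ - 2 / τ - μ k := by linarith
        calc c ≤ μ k * (2 * γ - μhi - 2 / τ) :=
              mul_le_mul_of_nonneg_right hμ1 hchi.le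
          _ ≤ μ k * (2 * γ - 2 / τ - μ k) :=
              mul_le_mul_of_nonneg_left h5 hμpos.le
      have h6 : 2 * μ k * (γ * ‖g‖ ^ 2 - η) ≤ 2 * μ k * ⟪g, x k - xdag⟫ := by
        apply mul_le_mul_of_nonneg_left hip; linarith
      have h7 : μ k * (2 * γ - 2 / τ - μ k) * ‖g‖ ^ 2
          ≤ 2 * μ k * (γ * ‖g‖ ^ 2 - η) - μ k ^ 2 * ‖g‖ ^ 2 := by
        have : 2 * μ k * (‖g‖ ^ 2 / τ) = μ k * (2 / τ) * ‖g‖ ^ 2 := by ring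
        nlinarith [hηG]
      linarith
    linarith [hexp2 ▸ h2]
  -- telescope
  have hsum : c * ∑ k ∈ Finset.range N, ‖gradient J (x k)‖ ^ 2
      ≤ ‖x 0 - xdag‖ ^ 2 := by
    rw [Finset.mul_sum]
    calc ∑ k ∈ Finset.range N, c * ‖gradient J (x k)‖ ^ 2
        ≤ ∑ k ∈ Finset.range N, (‖x k - xdag‖ ^ 2 - ‖x (k+1) - xdag‖ ^ 2) := by
          apply Finset.sum_le_sum
          intro k hk
          exact key k (Finset.mem_range.mp hk)
      _ = ‖x 0 - xdag‖ ^ 2 - ‖x N - xdag‖ ^ 2 := Finset.sum_range_sub' _ _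
      _ ≤ ‖x 0 - xdag‖ ^ 2 := by
          have := sq_nonneg ‖x N - xdag‖; linarith
  rw [le_div_iff₀ hcpos]
  linarith
end

section
/- Let X be a real Hilbert space, M ⊆ X a nonempty closed convex set, J : X → ℝ Fréchet differentiable, x† ∈ M, γ > 0, η ≥ 0 and τ > 1/γ. Assume the combined convexity/stationarity condition ⟨∇J(x), x − x†⟩ ≥ γ‖∇J(x)‖² − η for all x ∈ M. Let x_k ∈ M satisfy ‖∇J(x_k)‖² ≥ τη. Then (γτ − 1)η ≤ ⟨∇J(x_k), x_k − x†⟩ and (1 + 1/(γτ − 1))⟨∇J(x_k), x_k − x†⟩ ≥ γ‖∇J(x_k)‖². Moreover, if 0 < μ_k ≤ 2γ/(1 + 1/(γτ − 1)) and x_{k+1} = P_M(x_k − μ_k ∇J(x_k)), then ‖x_{k+1} − x†‖² − ‖x_k − x†‖² ≤ −μ_k(2γ/(1 + 1/(γτ − 1)) − μ_k)‖∇J(x_k)‖² ≤ 0. -/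
open RealInnerProductSpace

/-- Estimates under the combined convexity/stationarity condition
`⟪∇J(x), x - x†⟫ ≥ γ‖∇J(x)‖² - η` on `M`: before the stopping criterion,
`(γτ - 1)η ≤ ⟪∇J(x_k), x_k - x†⟫`,
`(1 + 1/(γτ - 1))⟪∇J(x_k), x_k - x†⟫ ≥ γ‖∇J(x_k)‖²`, and the error decreases
in one projected gradient step. -/
theorem projected_gradient_combined_condition_estimates
    {X : Type*} [NormedAddCommGroup X] [InnerProductSpace ℝ X] [CompleteSpace X]
    (M : Set X) (hMne : M.Nonempty) (hMcl : IsClosed M) (hMconv : Convex ℝ M)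
    (J : X → ℝ) (hJ : Differentiable ℝ J)
    (xdag : X) (hxdag : xdag ∈ M)
    (γ η τ : ℝ) (hγ : 0 < γ) (hη : 0 ≤ η) (hτ : 1 / γ < τ)
    (hcombined : ∀ x ∈ M,
      ⟪gradient J x, x - xdag⟫ ≥ γ * ‖gradient J x‖ ^ 2 - η)
    (xk : X) (hxk : xk ∈ M)
    (hdisc : ‖gradient J xk‖ ^ 2 ≥ τ * η) :
    (γ * τ - 1) * η ≤ ⟪gradient J xk, xk - xdag⟫ ∧
      (1 + 1 / (γ * τ - 1)) * ⟪gradient J xk, xk - xdag⟫ ≥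
        γ * ‖gradient J xk‖ ^ 2 ∧
      ∀ μ : ℝ, 0 < μ → μ ≤ 2 * γ / (1 + 1 / (γ * τ - 1)) →
        ∀ x1 ∈ M,
          (∀ z ∈ M, ⟪(xk - μ • gradient J xk) - x1, z - x1⟫ ≤ 0) →
          ‖x1 - xdag‖ ^ 2 - ‖xk - xdag‖ ^ 2 ≤
              -μ * (2 * γ / (1 + 1 / (γ * τ - 1)) - μ) * ‖gradient J xk‖ ^ 2 ∧
            -μ * (2 * γ / (1 + 1 / (γ * τ - 1)) - μ) * ‖gradient J xk‖ ^ 2 ≤ 0 := by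
  set g := gradient J xk with hg
  set p := (inner ℝ g (xk - xdag) : ℝ) with hpdef
  have hγτ : 0 < γ * τ - 1 := by
    have h := (div_lt_iff₀ hγ).mp hτ
    nlinarith
  have hp : p ≥ γ * ‖g‖ ^ 2 - η := hcombined xk hxk
  have h1 : (γ * τ - 1) * η ≤ p := by nlinarith
  have hfac : 0 < 1 + 1 / (γ * τ - 1) := by positivity
  have haη : η ≤ p / (γ * τ - 1) := (le_div_iff₀ hγτ).mpr (by linarith)
  have h2 : (1 + 1 / (γ * τ - 1)) * p ≥ γ * ‖g‖ ^ 2 := by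
    have hexp : (1 + 1 / (γ * τ - 1)) * p = p + p / (γ * τ - 1) := by
      field_simp
    linarith
  refine ⟨h1, h2, ?_⟩
  intro μ hμ0 hμc x1 hx1M hproj
  have hpge : p ≥ γ / (1 + 1 / (γ * τ - 1)) * ‖g‖ ^ 2 := by
    rw [ge_iff_le, div_mul_eq_mul_div, div_le_iff₀ hfac]
    nlinarith
  have hRHS : -μ * (2 * γ / (1 + 1 / (γ * τ - 1)) - μ) * ‖g‖ ^ 2 ≤ 0 := by
    have h1 : 0 ≤ 2 * γ / (1 + 1 / (γ * τ - 1)) - μ := by linarith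
    have : 0 ≤ μ * (2 * γ / (1 + 1 / (γ * τ - 1)) - μ) * ‖g‖ ^ 2 := by positivity
    linarith
  refine ⟨?_, hRHS⟩
  set y := xk - μ • g with hy
  have key : (inner ℝ (y - x1) (xdag - x1) : ℝ) ≤ 0 := hproj xdag hxdag
  have step1 : ‖x1 - xdag‖ ^ 2 ≤ ‖y - xdag‖ ^ 2 := by
    have hid : y - xdag = (y - x1) - (xdag - x1) := by abel
    have := norm_sub_sq_real (y - x1) (xdag - x1)
    rw [← hid] at this
    have hrev : ‖xdag - x1‖ ^ 2 = ‖x1 - xdag‖ ^ 2 := by rw [norm_sub_rev]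
    nlinarith [sq_nonneg ‖y - x1‖, key]
  have step2 : ‖y - xdag‖ ^ 2 = ‖xk - xdag‖ ^ 2 - 2 * μ * p + μ ^ 2 * ‖g‖ ^ 2 := by
    have hid : y - xdag = (xk - xdag) - μ • g := by rw [hy]; abel
    rw [hid, norm_sub_sq_real, real_inner_smul_right, norm_smul]
    rw [real_inner_comm, ← hpdef]
    simp [abs_of_pos hμ0, mul_pow]
    ring
  have hμp : μ * (2 * γ / (1 + 1 / (γ * τ - 1))) * ‖g‖ ^ 2 ≤ 2 * μ * p := by
    have h := mul_le_mul_of_nonneg_left hpge (le_of_lt hμ0)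
    have heq : μ * (2 * γ / (1 + 1 / (γ * τ - 1))) * ‖g‖ ^ 2
        = 2 * (μ * (γ / (1 + 1 / (γ * τ - 1)) * ‖g‖ ^ 2)) := by ring
    rw [heq]; linarith
  nlinarith [step1, step2]
end

section
/- Let X be a real Hilbert space, M ⊆ X a nonempty closed convex set, J : X → ℝ Fréchet differentiable, x† ∈ M, γ > 0, η ≥ 0 and τ > 1/γ. Assume ⟨∇J(x), x − x†⟩ ≥ γ‖∇J(x)‖² − η for all x ∈ M. Let (x_k)_{0 ≤ k ≤ N} ⊆ M be generated by x_{k+1} = P_M(x_k − μ_k ∇J(x_k)) with stepsizes 0 < μ̲ ≤ μ_k ≤ μ̄ < 2γ/(1 + 1/(γτ − 1)), and assume ‖∇J(x_k)‖² ≥ τη for all k ≤ N − 1. Then ∑_{k=0}^{N−1} ‖∇J(x_k)‖² ≤ (1 + 1/(γτ − 1)) ‖x_0 − x†‖² / (γ μ̲ (2 − (μ̄/γ)(1 + 1/(γτ − 1)))). -/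
open RealInnerProductSpace

set_option maxHeartbeats 1000000 in
/-- Summability estimate for the projected gradient method under the combined
convexity/stationarity condition:
`∑_{k=0}^{N-1} ‖∇J(x_k)‖² ≤ (1 + 1/(γτ-1)) ‖x_0 - x†‖² / (γ μ̲ (2 - (μ̄/γ)(1 + 1/(γτ-1))))`. -/
theorem projected_gradient_gradient_summability_combined
    {X : Type*} [NormedAddCommGroup X] [InnerProductSpace ℝ X] [CompleteSpace X]
    (M : Set X) (hMne : M.Nonempty) (hMcl : IsClosed M) (hMconv : Convex ℝ M)
    (J : X → ℝ) (hJ : Differentiable ℝ J)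
    (xdag : X) (hxdag : xdag ∈ M)
    (γ η τ : ℝ) (hγ : 0 < γ) (hη : 0 ≤ η) (hτ : 1 / γ < τ)
    (hcombined : ∀ x ∈ M,
      ⟪gradient J x, x - xdag⟫ ≥ γ * ‖gradient J x‖ ^ 2 - η)
    (N : ℕ) (x : ℕ → X) (hxM : ∀ k ≤ N, x k ∈ M)
    (μ : ℕ → ℝ) (μlo μhi : ℝ) (hμlo : 0 < μlo)
    (hμ : ∀ k < N, μlo ≤ μ k ∧ μ k ≤ μhi)
    (hμhi : μhi < 2 * γ / (1 + 1 / (γ * τ - 1)))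
    (hproj : ∀ k < N, ∀ z ∈ M,
      ⟪(x k - μ k • gradient J (x k)) - x (k + 1), z - x (k + 1)⟫ ≤ 0)
    (hdisc : ∀ k < N, ‖gradient J (x k)‖ ^ 2 ≥ τ * η) :
    ∑ k ∈ Finset.range N, ‖gradient J (x k)‖ ^ 2 ≤
      (1 + 1 / (γ * τ - 1)) * ‖x 0 - xdag‖ ^ 2 /
        (γ * μlo * (2 - (μhi / γ) * (1 + 1 / (γ * τ - 1)))) := by

  have hγτ1 : 0 < γ * τ - 1 := by
    have := (div_lt_iff₀ hγ).mp hτ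
    nlinarith
  have hτpos : 0 < τ := by nlinarith
  set c : ℝ := 1 + 1 / (γ * τ - 1) with hc
  have hcpos : 0 < c := by
    have : 0 < 1 / (γ * τ - 1) := by positivity
    rw [hc]; linarith
  have h2γc : 2 * γ / c = 2 * γ - 2 / τ := by
    rw [hc]; field_simp; ring
  have hD : 0 < μlo * (2 * γ / c - μhi) := by
    have h1 : 0 < 2 * γ / c - μhi := by linarith [hμhi]
    positivity
  have hkey : ∀ k < N, μlo * (2 * γ / c - μhi) * ‖gradient J (x k)‖ ^ 2 ≤
      ‖x k - xdag‖ ^ 2 - ‖x (k + 1) - xdag‖ ^ 2 := by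
    intro k hk
    set g := gradient J (x k) with hg
    obtain ⟨h1, h2⟩ := hμ k hk
    have hproj' := hproj k hk xdag hxdag
    have hcomb := hcombined (x k) (hxM k hk.le)
    have hd := hdisc k hk
    have hip : 0 ≤ ⟪(x k - μ k • g) - x (k + 1), x (k + 1) - xdag⟫ := by
      rw [show xdag - x (k + 1) = -(x (k + 1) - xdag) by abel, inner_neg_right] at hproj'
      linarith
    have step1 : ‖x (k + 1) - xdag‖ ^ 2 ≤ ‖(x k - μ k • g) - xdag‖ ^ 2 := by
      have hsplit : (x k - μ k • g) - xdag =
          ((x k - μ k • g) - x (k + 1)) + (x (k + 1) - xdag) := by abel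
      rw [hsplit, norm_add_sq_real]
      nlinarith [sq_nonneg ‖(x k - μ k • g) - x (k + 1)‖]
    have step2 : ‖(x k - μ k • g) - xdag‖ ^ 2 =
        ‖x k - xdag‖ ^ 2 - 2 * μ k * ⟪g, x k - xdag⟫ + μ k ^ 2 * ‖g‖ ^ 2 := by
      have hsplit : (x k - μ k • g) - xdag = (x k - xdag) - μ k • g := by abel
      rw [hsplit, norm_sub_sq_real, real_inner_smul_right, norm_smul,
        real_inner_comm]
      simp [mul_pow, sq_abs]
      ring
    have hμpos : 0 < μ k := lt_of_lt_of_le hμlo h1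
    have hηG : τ * η ≤ ‖g‖ ^ 2 := hd
    -- key algebra: μlo (2γ/c - μhi) G ≤ μk (2γ - 2/τ - μk) G ≤ 2 μk (γ G - η) - μk² G
    have halg : μlo * (2 * γ / c - μhi) * ‖g‖ ^ 2 ≤
        2 * μ k * ⟪g, x k - xdag⟫ - μ k ^ 2 * ‖g‖ ^ 2 := by
      rw [h2γc]
      have hGnn : (0:ℝ) ≤ ‖g‖ ^ 2 := by positivity
      have hfac : μlo * (2 * γ - 2 / τ - μhi) ≤ μ k * (2 * γ - 2 / τ - μ k) := by
        have hA : 0 < 2 * γ - 2 / τ - μhi := by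
          have := hD
          nlinarith [h2γc]
        nlinarith
      have hτη : 2 * μ k * η ≤ 2 * μ k * (‖g‖ ^ 2 / τ) := by
        have hh : η ≤ ‖g‖ ^ 2 / τ := by
          rw [le_div_iff₀ hτpos]; nlinarith [hηG]
        have := mul_le_mul_of_nonneg_left hh (by positivity : (0:ℝ) ≤ 2 * μ k)
        linarith
      have hμτ : 2 * μ k * (‖g‖ ^ 2 / τ) = (2 / τ) * μ k * ‖g‖ ^ 2 := by
        field_simp
      nlinarith [mul_le_mul_of_nonneg_right hfac hGnn]
    linarith [step1, step2.le, step2.ge, halg]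
  have hsum : μlo * (2 * γ / c - μhi) * ∑ k ∈ Finset.range N, ‖gradient J (x k)‖ ^ 2 ≤
      ‖x 0 - xdag‖ ^ 2 := by
    rw [Finset.mul_sum]
    calc ∑ k ∈ Finset.range N, μlo * (2 * γ / c - μhi) * ‖gradient J (x k)‖ ^ 2
        ≤ ∑ k ∈ Finset.range N, (‖x k - xdag‖ ^ 2 - ‖x (k + 1) - xdag‖ ^ 2) :=
          Finset.sum_le_sum fun k hk => hkey k (Finset.mem_range.mp hk)
      _ = ‖x 0 - xdag‖ ^ 2 - ‖x N - xdag‖ ^ 2 :=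
          Finset.sum_range_sub' (fun k => ‖x k - xdag‖ ^ 2) N
      _ ≤ ‖x 0 - xdag‖ ^ 2 := by nlinarith [sq_nonneg ‖x N - xdag‖]
  have h2 : 0 < 2 - μhi / γ * c := by
    have hmc : μhi * c < 2 * γ := (lt_div_iff₀ hcpos).mp hμhi
    rw [sub_pos, div_mul_eq_mul_div, div_lt_iff₀ hγ]
    linarith
  have hrhs : c * ‖x 0 - xdag‖ ^ 2 / (γ * μlo * (2 - μhi / γ * c)) =
      ‖x 0 - xdag‖ ^ 2 / (μlo * (2 * γ / c - μhi)) := by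
    rw [div_eq_div_iff (by positivity) hD.ne']
    field_simp
  rw [show (1 + 1 / (γ * τ - 1)) = c from rfl] at *
  rw [hrhs, le_div_iff₀ hD]
  linarith [hsum]
end

section
/- (Opial's lemma, discrete version) Let S be a nonempty subset of a real Hilbert space X and (x_k)_{k∈ℕ} a sequence in X. Assume that (i) for every z ∈ S, the limit lim_{k→∞} ‖x_k − z‖ exists, and (ii) every weak sequential limit point of (x_k) belongs to S. Then (x_k) converges weakly, as k → ∞, to a point of S. -/
open RealInnerProductSpace Filter

/-- Weak sequential compactness of bounded sequences in a real Hilbert space. -/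
theorem weak_seq_compact_aux
    {X : Type*} [NormedAddCommGroup X] [InnerProductSpace ℝ X] [CompleteSpace X]
    (x : ℕ → X) (M : ℝ) (hM : ∀ k, ‖x k‖ ≤ M) :
    ∃ (p : X) (φ : ℕ → ℕ), StrictMono φ ∧
      ∀ y : X, Tendsto (fun k => ⟪x (φ k), y⟫) atTop (nhds ⟪p, y⟫) := by
  -- separable closed span
  set Y : Submodule ℝ X := (Submodule.span ℝ (Set.range x)).topologicalClosure with hY
  haveI : CompleteSpace Y :=
    (Submodule.span ℝ (Set.range x)).isClosed_topologicalClosure.completeSpace_coe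
  have hxY : ∀ k, x k ∈ Y :=
    fun k => Submodule.le_topologicalClosure _ (Submodule.subset_span (Set.mem_range_self k))
  obtain ⟨c, hc_count, hc_sub⟩ :
      TopologicalSpace.IsSeparable (Submodule.span ℝ (Set.range x) : Set X) :=
    (Set.countable_range x).isSeparable.span
  have hYc : (Y : Set X) ⊆ closure c := by
    have := closure_mono hc_sub
    rw [closure_closure] at this
    exact this
  have hcne : c.Nonempty := by
    rcases Set.eq_empty_or_nonempty c with h | h
    · exfalso
      have : (0 : X) ∈ closure c := hYc Y.zero_mem
      simp [h] at this
    · exact h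
  obtain ⟨e, he⟩ := hc_count.exists_eq_range hcne
  have hYe : (Y : Set X) ⊆ closure (Set.range e) := he ▸ hYc
  -- diagonal extraction via compactness in ℝ^ℕ
  have hM0 : 0 ≤ M := le_trans (norm_nonneg _) (hM 0)
  set C : Set (ℕ → ℝ) := Set.univ.pi (fun n => Set.Icc (-(M * ‖e n‖)) (M * ‖e n‖)) with hC
  have hCcomp : IsCompact C := isCompact_univ_pi (fun n => isCompact_Icc)
  have hmem : ∀ k, (fun n => ⟪x k, e n⟫) ∈ C := by
    intro k n _
    have h1 : |⟪x k, e n⟫| ≤ ‖x k‖ * ‖e n‖ := abs_real_inner_le_norm _ _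
    have h2 : ‖x k‖ * ‖e n‖ ≤ M * ‖e n‖ := by
      exact mul_le_mul_of_nonneg_right (hM k) (norm_nonneg _)
    constructor
    · linarith [neg_abs_le (⟪x k, e n⟫), abs_nonneg (⟪x k, e n⟫)]
    · linarith [le_abs_self (⟪x k, e n⟫)]
  obtain ⟨g, -, φ, hφ, hg⟩ := hCcomp.tendsto_subseq hmem
  have hgn : ∀ n, Tendsto (fun k => ⟪x (φ k), e n⟫) atTop (nhds (g n)) := by
    intro n
    have := tendsto_pi_nhds.1 hg n
    simpa using this
  -- convergence of ⟪x (φ k), y⟫ for all y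
  have key : ∀ y : X, ∃ l : ℝ, Tendsto (fun k => ⟪x (φ k), y⟫) atTop (nhds l) := by
    have keyc : ∀ y ∈ closure (Set.range e),
        ∃ l : ℝ, Tendsto (fun k => ⟪x (φ k), y⟫) atTop (nhds l) := by
      intro y hy
      have hCauchy : CauchySeq (fun k => ⟪x (φ k), y⟫) := by
        rw [Metric.cauchySeq_iff]
        intro ε hε
        obtain ⟨b, ⟨n, rfl⟩, hb⟩ := Metric.mem_closure_iff.1 hy (ε / (4 * (M + 1)))
          (by positivity)
        have hcn : CauchySeq (fun k => ⟪x (φ k), e n⟫) := (hgn n).cauchySeq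
        rw [Metric.cauchySeq_iff] at hcn
        obtain ⟨N, hN⟩ := hcn (ε / 2) (by positivity)
        refine ⟨N, fun a ha b' hb' => ?_⟩
        have hd : dist y (e n) < ε / (4 * (M + 1)) := hb
        have expand : ∀ j, ⟪x (φ j), y⟫ = ⟪x (φ j), e n⟫ + ⟪x (φ j), y - e n⟫ := by
          intro j
          rw [← inner_add_right]
          congr 1
          abel
        have bnd : ∀ j, |⟪x (φ j), y - e n⟫| ≤ M * (ε / (4 * (M + 1))) := by
          intro j
          calc |⟪x (φ j), y - e n⟫| ≤ ‖x (φ j)‖ * ‖y - e n‖ := abs_real_inner_le_norm _ _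
            _ ≤ M * (ε / (4 * (M + 1))) := by
                apply mul_le_mul (hM _) ?_ (norm_nonneg _) hM0
                rw [← dist_eq_norm] at *
                exact le_of_lt hd
        have hMe : M * (ε / (4 * (M + 1))) < ε / 4 := by
          have h1 : M * (ε / (4 * (M + 1))) = M * ε / (4 * (M + 1)) := by ring
          rw [h1, div_lt_div_iff₀ (by positivity) (by norm_num)]
          nlinarith
        have := hN a ha b' hb'
        rw [Real.dist_eq] at this ⊢
        rw [expand a, expand b']
        calc |⟪x (φ a), e n⟫ + ⟪x (φ a), y - e n⟫ -
              (⟪x (φ b'), e n⟫ + ⟪x (φ b'), y - e n⟫)|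
            ≤ |⟪x (φ a), e n⟫ - ⟪x (φ b'), e n⟫| +
              (|⟪x (φ a), y - e n⟫| + |⟪x (φ b'), y - e n⟫|) := by
              have := abs_sub_abs_le_abs_sub (⟪x (φ a), y - e n⟫) (⟪x (φ b'), y - e n⟫)
              have h3 := abs_add_le (⟪x (φ a), e n⟫ - ⟪x (φ b'), e n⟫)
                (⟪x (φ a), y - e n⟫ - ⟪x (φ b'), y - e n⟫)
              have h4 := abs_sub (⟪x (φ a), y - e n⟫) (⟪x (φ b'), y - e n⟫)
              calc _ = |(⟪x (φ a), e n⟫ - ⟪x (φ b'), e n⟫) +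
                    (⟪x (φ a), y - e n⟫ - ⟪x (φ b'), y - e n⟫)| := by ring_nf
                _ ≤ _ := le_trans h3 (add_le_add le_rfl (abs_sub _ _))
          _ < ε / 2 + (ε / 4 + ε / 4) := by
              have b1 := bnd a; have b2 := bnd b'
              have := hMe
              linarith
          _ = ε := by ring
      exact cauchySeq_tendsto_of_complete hCauchy
    intro y
    -- decompose y = P y + (y - P y)
    set Py : X := (Y.orthogonalProjectionOnto y : X) with hPy
    have hmemY : Py ∈ Y := (Y.orthogonalProjectionOnto y).2
    have horth : y - Py ∈ Yᗮ := Submodule.sub_starProjection_mem_orthogonal (K := Y) y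
    have heq : ∀ k, ⟪x (φ k), y⟫ = ⟪x (φ k), Py⟫ := by
      intro k
      have h0 : ⟪x (φ k), y - Py⟫ = 0 := (Submodule.mem_orthogonal Y _).1 horth _ (hxY _)
      have : ⟪x (φ k), y⟫ = ⟪x (φ k), Py⟫ + ⟪x (φ k), y - Py⟫ := by
        rw [← inner_add_right]; congr 1; abel
      rw [this, h0, add_zero]
    obtain ⟨l, hl⟩ := keyc Py (hYe hmemY)
    exact ⟨l, by simpa only [heq] using hl⟩
  -- build the limit functional and Riesz representative
  choose L hL using key
  have Ladd : ∀ y z, L (y + z) = L y + L z := by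
    intro y z
    refine tendsto_nhds_unique ?_ ((hL y).add (hL z))
    have : (fun k => ⟪x (φ k), y⟫ + ⟪x (φ k), z⟫) = fun k => ⟪x (φ k), y + z⟫ := by
      funext k; rw [inner_add_right]
    rw [this]; exact hL (y + z)
  have Lsmul : ∀ (r : ℝ) y, L (r • y) = r * L y := by
    intro r y
    refine tendsto_nhds_unique ?_ ((hL y).const_mul r)
    have : (fun k => r * ⟪x (φ k), y⟫) = fun k => ⟪x (φ k), r • y⟫ := by
      funext k; rw [real_inner_smul_right]
    rw [this]; exact hL (r • y)
  have Lbnd : ∀ y, |L y| ≤ M * ‖y‖ := by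
    intro y
    have : Tendsto (fun k => |⟪x (φ k), y⟫|) atTop (nhds (|L y|)) := (hL y).abs
    refine le_of_tendsto this (Eventually.of_forall fun k => ?_)
    calc |⟪x (φ k), y⟫| ≤ ‖x (φ k)‖ * ‖y‖ := abs_real_inner_le_norm _ _
      _ ≤ M * ‖y‖ := mul_le_mul_of_nonneg_right (hM _) (norm_nonneg _)
  let Llin : X →ₗ[ℝ] ℝ :=
    { toFun := L, map_add' := Ladd, map_smul' := Lsmul }
  let F : X →L[ℝ] ℝ := Llin.mkContinuous M (fun y => by
    simpa [Llin, Real.norm_eq_abs] using Lbnd y)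
  refine ⟨(InnerProductSpace.toDual ℝ X).symm F, φ, hφ, fun y => ?_⟩
  have : ⟪(InnerProductSpace.toDual ℝ X).symm F, y⟫ = F y :=
    InnerProductSpace.toDual_symm_apply
  rw [this]
  exact hL y

/-- Weak convergence of a sequence in a real inner product space. -/
def WeakConvSeq {X : Type*} [NormedAddCommGroup X] [InnerProductSpace ℝ X]
    (x : ℕ → X) (p : X) : Prop :=
  ∀ y : X, Tendsto (fun k => ⟪x k, y⟫) atTop (nhds ⟪p, y⟫)

/-- Opial's lemma, discrete version: if for every `z ∈ S` the limit
`lim_k ‖x_k - z‖` exists and every weak sequential limit point of `(x_k)`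
belongs to `S`, then `(x_k)` converges weakly to a point of `S`. -/
theorem opial_discrete
    {X : Type*} [NormedAddCommGroup X] [InnerProductSpace ℝ X] [CompleteSpace X]
    (S : Set X) (hS : S.Nonempty) (x : ℕ → X)
    (h1 : ∀ z ∈ S, ∃ l : ℝ, Tendsto (fun k => ‖x k - z‖) atTop (nhds l))
    (h2 : ∀ (p : X) (φ : ℕ → ℕ), StrictMono φ → WeakConvSeq (x ∘ φ) p → p ∈ S) :
    ∃ p ∈ S, WeakConvSeq x p := by
  obtain ⟨z, hz⟩ := hS
  obtain ⟨l0, hl0⟩ := h1 z hz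
  obtain ⟨B, hB⟩ := hl0.bddAbove_range
  have hM : ∀ k, ‖x k‖ ≤ B + ‖z‖ := by
    intro k
    have h3 : ‖x k - z‖ ≤ B := hB (Set.mem_range_self k)
    calc ‖x k‖ = ‖x k - z + z‖ := by rw [sub_add_cancel]
      _ ≤ ‖x k - z‖ + ‖z‖ := norm_add_le _ _
      _ ≤ B + ‖z‖ := by linarith
  obtain ⟨p, φ, hφ, hwp⟩ := weak_seq_compact_aux x (B + ‖z‖) hM
  have hpS : p ∈ S := h2 p φ hφ (fun y => hwp y)
  obtain ⟨lp, hlp⟩ := h1 p hpS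
  have uniq : ∀ (q : X) (ψ : ℕ → ℕ), StrictMono ψ →
      (∀ y : X, Tendsto (fun k => ⟪x (ψ k), y⟫) atTop (nhds ⟪q, y⟫)) → q = p := by
    intro q ψ hψ hwq
    have hqS : q ∈ S := h2 q ψ hψ (fun y => hwq y)
    obtain ⟨lq, hlq⟩ := h1 q hqS
    have ha : ∀ k, ‖x k - q‖ ^ 2 - ‖x k - p‖ ^ 2
        = (‖q‖ ^ 2 - ‖p‖ ^ 2) + 2 * ⟪x k, p - q⟫ := by
      intro k
      have e1 := norm_sub_sq_real (x k) q
      have e2 := norm_sub_sq_real (x k) p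
      rw [inner_sub_right]
      linarith
    have hta : Tendsto (fun k => ‖x k - q‖ ^ 2 - ‖x k - p‖ ^ 2) atTop
        (nhds (lq ^ 2 - lp ^ 2)) := (hlq.pow 2).sub (hlp.pow 2)
    have limeq : ∀ (σ : ℕ → ℕ) (r : X), StrictMono σ →
        Tendsto (fun k => ⟪x (σ k), p - q⟫) atTop (nhds ⟪r, p - q⟫) →
        lq ^ 2 - lp ^ 2 = (‖q‖ ^ 2 - ‖p‖ ^ 2) + 2 * ⟪r, p - q⟫ := by
      intro σ r hσ hr
      have hsub : Tendsto (fun k => ‖x (σ k) - q‖ ^ 2 - ‖x (σ k) - p‖ ^ 2) atTop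
          (nhds (lq ^ 2 - lp ^ 2)) := hta.comp hσ.tendsto_atTop
      have hsub' : Tendsto (fun k => (‖q‖ ^ 2 - ‖p‖ ^ 2) + 2 * ⟪x (σ k), p - q⟫) atTop
          (nhds ((‖q‖ ^ 2 - ‖p‖ ^ 2) + 2 * ⟪r, p - q⟫)) :=
        tendsto_const_nhds.add (hr.const_mul 2)
      refine tendsto_nhds_unique ?_ hsub'
      simpa only [ha] using hsub
    have key1 := limeq φ p hφ (hwp (p - q))
    have key2 := limeq ψ q hψ (hwq (p - q))
    have hinner : ⟪p - q, p - q⟫ = 0 := by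
      rw [inner_sub_left]
      linarith
    have : p - q = 0 := by
      have := inner_self_eq_zero (𝕜 := ℝ).1 hinner
      exact this
    have : q = p := by
      have h4 : p = q := sub_eq_zero.1 this
      exact h4.symm
    exact this
  refine ⟨p, hpS, fun y => ?_⟩
  by_contra hcon
  rw [Metric.tendsto_atTop] at hcon
  push_neg at hcon
  obtain ⟨ε, hε, hfr⟩ := hcon
  have hfreq : ∃ᶠ k in atTop, ε ≤ dist (⟪x k, y⟫) ⟪p, y⟫ :=
    frequently_atTop.2 fun N => by
      obtain ⟨n, hn, h⟩ := hfr N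
      exact ⟨n, hn, h⟩
  obtain ⟨ψ, hψ, hψε⟩ := extraction_of_frequently_atTop hfreq
  obtain ⟨q, ρ, hρ, hwq⟩ := weak_seq_compact_aux (x ∘ ψ) (B + ‖z‖) (fun k => hM _)
  have hq : q = p := uniq q (ψ ∘ ρ) (hψ.comp hρ) (fun y' => hwq y')
  have ht : Tendsto (fun k => ⟪x (ψ (ρ k)), y⟫) atTop (nhds ⟪p, y⟫) := by
    have := hwq y
    rw [hq] at this
    exact this
  have hd : Tendsto (fun k => dist (⟪x (ψ (ρ k)), y⟫) ⟪p, y⟫) atTop (nhds 0) := by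
    rw [← dist_self (⟪p, y⟫ : ℝ)]
    exact ht.dist tendsto_const_nhds
  have : ε ≤ 0 :=
    le_of_tendsto_of_tendsto' tendsto_const_nhds hd fun k => hψε (ρ k)
  linarith
end

section
/- (Opial's lemma, continuous version) Let S be a nonempty subset of a real Hilbert space X and x : [0, ∞) → X a map. Assume that (i) for every z ∈ S, the limit lim_{t→∞} ‖x(t) − z‖ exists, and (ii) every weak sequential limit point of x(t) as t → ∞ (i.e., every weak limit of a sequence x(t_n) with t_n → ∞) belongs to S. Then x(t) converges weakly, as t → ∞, to a point of S. -/
open RealInnerProductSpace Filter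

theorem weak_seq_compact {X : Type*} [NormedAddCommGroup X] [InnerProductSpace ℝ X]
    [CompleteSpace X] (u : ℕ → X) (C : ℝ) (hC : ∀ n, ‖u n‖ ≤ C) :
    ∃ p : X, ∃ φ : ℕ → ℕ, StrictMono φ ∧ WeakConvSeq (u ∘ φ) p := by
  have hC0 : 0 ≤ C := le_trans (norm_nonneg (u 0)) (hC 0)
  -- separable subspace containing the sequence
  set K : Submodule ℝ X := (Submodule.span ℝ (Set.range u)).topologicalClosure with hK
  obtain ⟨c, hc_count, hc_sub⟩ :=
    ((Set.countable_range u).isSeparable.span (R := ℝ))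
  obtain ⟨d, hd⟩ := (hc_count.insert 0).exists_eq_range (Set.insert_nonempty _ _)
  have hKd : (K : Set X) ⊆ closure (Set.range d) := by
    have h1 : (Submodule.span ℝ (Set.range u) : Set X) ⊆ closure (Set.range d) := by
      refine hc_sub.trans (closure_mono ?_)
      rw [← hd]; exact Set.subset_insert _ _
    have : (K : Set X) ⊆ closure (closure (Set.range d)) := by
      rw [hK]
      exact closure_mono h1
    rwa [closure_closure] at this
  have huK : ∀ n, u n ∈ K := fun n =>
    Submodule.le_topologicalClosure _ (Submodule.subset_span ⟨n, rfl⟩)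
  -- extract subsequence with convergent inner products against d j
  set s : Set (ℕ → ℝ) := Set.univ.pi (fun j => Set.Icc (-(C * ‖d j‖)) (C * ‖d j‖)) with hs
  have hscompact : IsCompact s := isCompact_univ_pi (fun j => isCompact_Icc)
  have hmem : ∀ n, (fun j => ⟪u n, d j⟫) ∈ s := by
    intro n
    rw [hs, Set.mem_univ_pi]
    intro j
    have := abs_real_inner_le_norm (u n) (d j)
    have hb : |⟪u n, d j⟫| ≤ C * ‖d j‖ :=
      this.trans (mul_le_mul_of_nonneg_right (hC n) (norm_nonneg _))
    exact abs_le.mp hb |>.imp id id |> fun h => ⟨h.1, h.2⟩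
  obtain ⟨L, -, φ, hφ, hLtend⟩ := hscompact.isSeqCompact hmem
  set v : ℕ → X := u ∘ φ with hv
  have hconv : ∀ j, Tendsto (fun n => ⟪v n, d j⟫) atTop (nhds (L j)) := by
    intro j
    have := tendsto_pi_nhds.mp hLtend j
    exact this
  -- Cauchy for y in closure of range d
  have hCauchy : ∀ y ∈ closure (Set.range d), CauchySeq (fun n => ⟪v n, y⟫) := by
    intro y hy
    rw [Metric.cauchySeq_iff]
    intro ε hε
    have hC1 : (0:ℝ) < C + 1 := by linarith
    obtain ⟨w, ⟨j, rfl⟩, hw⟩ := Metric.mem_closure_iff.mp hy (ε / (4 * (C + 1)))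
      (by positivity)
    have hcj : CauchySeq (fun n => ⟪v n, d j⟫) := (hconv j).cauchySeq
    rw [Metric.cauchySeq_iff] at hcj
    obtain ⟨N, hN⟩ := hcj (ε / 2) (by linarith)
    refine ⟨N, fun m hm n hn => ?_⟩
    have key : ∀ k, |⟪v k, y⟫ - ⟪v k, d j⟫| ≤ ε / 4 := by
      intro k
      have : ⟪v k, y⟫ - ⟪v k, d j⟫ = ⟪v k, y - d j⟫ := (inner_sub_right _ _ _).symm
      rw [this]
      have h1 := abs_real_inner_le_norm (v k) (y - d j)
      have h2 : ‖v k‖ ≤ C := hC _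
      have h3 : ‖y - d j‖ < ε / (4 * (C + 1)) := by
        rwa [dist_eq_norm] at hw
      calc |⟪v k, y - d j⟫| ≤ ‖v k‖ * ‖y - d j‖ := h1
        _ ≤ C * ‖y - d j‖ := mul_le_mul_of_nonneg_right h2 (norm_nonneg _)
        _ ≤ C * (ε / (4 * (C + 1))) := mul_le_mul_of_nonneg_left h3.le hC0
        _ ≤ ε / 4 := by
            rw [mul_div_assoc']
            rw [div_le_div_iff₀ (by positivity) (by norm_num)]
            nlinarith
    have hmn := hN m hm n hn
    have : dist ⟪v m, y⟫ ⟪v n, y⟫ ≤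
        |⟪v m, y⟫ - ⟪v m, d j⟫| + dist ⟪v m, d j⟫ ⟪v n, d j⟫ + |⟪v n, y⟫ - ⟪v n, d j⟫| := by
      rw [Real.dist_eq, Real.dist_eq]
      have : ⟪v m, y⟫ - ⟪v n, y⟫ =
          (⟪v m, y⟫ - ⟪v m, d j⟫) + (⟪v m, d j⟫ - ⟪v n, d j⟫) + (⟪v n, d j⟫ - ⟪v n, y⟫) := by
        ring
      rw [this]
      calc |(⟪v m, y⟫ - ⟪v m, d j⟫) + (⟪v m, d j⟫ - ⟪v n, d j⟫) + (⟪v n, d j⟫ - ⟪v n, y⟫)|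
          ≤ |(⟪v m, y⟫ - ⟪v m, d j⟫) + (⟪v m, d j⟫ - ⟪v n, d j⟫)| + |⟪v n, d j⟫ - ⟪v n, y⟫| :=
            abs_add_le _ _
        _ ≤ |⟪v m, y⟫ - ⟪v m, d j⟫| + |⟪v m, d j⟫ - ⟪v n, d j⟫| + |⟪v n, d j⟫ - ⟪v n, y⟫| := by
            have := abs_add_le (⟪v m, y⟫ - ⟪v m, d j⟫) (⟪v m, d j⟫ - ⟪v n, d j⟫)
            linarith
        _ = |⟪v m, y⟫ - ⟪v m, d j⟫| + |⟪v m, d j⟫ - ⟪v n, d j⟫| + |⟪v n, y⟫ - ⟪v n, d j⟫| := by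
            rw [abs_sub_comm ⟪v n, d j⟫]
    linarith [key m, key n, this, hmn]
  haveI : CompleteSpace K := (Submodule.span ℝ (Set.range u)).isClosed_topologicalClosure.completeSpace_coe
  have hconv_all : ∀ y : X, ∃ r : ℝ, Tendsto (fun n => ⟪v n, y⟫) atTop (nhds r) := by
    intro y
    have hPy : ((K.orthogonalProjectionOnto y : K) : X) ∈ closure (Set.range d) :=
      hKd (K.orthogonalProjectionOnto y).2
    obtain ⟨r, hr⟩ := cauchySeq_tendsto_of_complete (hCauchy _ hPy)
    refine ⟨r, ?_⟩
    have heq : ∀ n, ⟪v n, y⟫ = ⟪v n, ((K.orthogonalProjectionOnto y : K) : X)⟫ := by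
      intro n
      have hmem : y - ((K.orthogonalProjectionOnto y : K) : X) ∈ Kᗮ :=
        K.sub_starProjection_mem_orthogonal y
      have h0 : ⟪v n, y - ((K.orthogonalProjectionOnto y : K) : X)⟫ = 0 :=
        (Submodule.mem_orthogonal K _).mp hmem (v n) (huK (φ n))
      rw [inner_sub_right] at h0
      exact sub_eq_zero.mp h0
    simp only [heq]
    exact hr
  choose f hf using hconv_all
  have hfadd : ∀ y z, f (y + z) = f y + f z := by
    intro y z
    have h1 := (hf y).add (hf z)
    refine tendsto_nhds_unique (hf (y + z)) ?_
    have : (fun n => ⟪v n, y + z⟫) = fun n => ⟪v n, y⟫ + ⟪v n, z⟫ := by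
      funext n; exact inner_add_right _ _ _
    rw [this]; exact h1
  have hfsmul : ∀ (a : ℝ) (y : X), f (a • y) = a * f y := by
    intro a y
    have h1 := (hf y).const_mul a
    refine tendsto_nhds_unique (hf (a • y)) ?_
    have : (fun n => ⟪v n, a • y⟫) = fun n => a * ⟪v n, y⟫ := by
      funext n; exact real_inner_smul_right _ _ _
    rw [this]; exact h1
  have hbound : ∀ y, ‖f y‖ ≤ C * ‖y‖ := by
    intro y
    rw [Real.norm_eq_abs]
    refine le_of_tendsto (hf y).abs (Eventually.of_forall fun n => ?_)
    exact (abs_real_inner_le_norm _ _).trans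
      (mul_le_mul_of_nonneg_right (hC _) (norm_nonneg _))
  let Flin : X →ₗ[ℝ] ℝ :=
    { toFun := f, map_add' := hfadd, map_smul' := hfsmul }
  let F : X →L[ℝ] ℝ := Flin.mkContinuous C hbound
  refine ⟨(InnerProductSpace.toDual ℝ X).symm F, φ, hφ, fun y => ?_⟩
  have hp : ⟪(InnerProductSpace.toDual ℝ X).symm F, y⟫ = f y := by
    rw [← InnerProductSpace.toDual_apply_apply]
    simp [F, Flin]
  rw [hp]
  exact hf y

theorem extract_aux {X : Type*} [NormedAddCommGroup X] [InnerProductSpace ℝ X] [CompleteSpace X]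
    (x : ℝ → X) (T C : ℝ) (hC : ∀ s : ℝ, T ≤ s → ‖x s‖ ≤ C)
    (t : ℕ → ℝ) (ht : Tendsto t atTop atTop) :
    ∃ p : X, ∃ ψ : ℕ → ℕ, Tendsto (fun n => t (ψ n)) atTop atTop ∧
      WeakConvSeq (fun n => x (t (ψ n))) p := by
  obtain ⟨N, hN⟩ := eventually_atTop.mp (ht.eventually_ge_atTop T)
  obtain ⟨p, φ, hφ, hw⟩ := weak_seq_compact (fun n => x (t (n + N))) C
    (fun n => hC _ (hN _ (Nat.le_add_left N n)))
  have hmono : Tendsto (fun n => φ n + N) atTop atTop :=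
    tendsto_atTop_mono (fun n => le_trans hφ.le_apply (Nat.le_add_right _ N)) tendsto_id
  exact ⟨p, fun n => φ n + N, ht.comp hmono, hw⟩


/-- Opial's lemma, continuous version: if for every `z ∈ S` the limit
`lim_{t→∞} ‖x(t) - z‖` exists and every weak limit of a sequence `x(t_n)` with
`t_n → ∞` belongs to `S`, then `x(t)` converges weakly, as `t → ∞`, to a point
of `S`. -/
theorem opial_continuous
    {X : Type*} [NormedAddCommGroup X] [InnerProductSpace ℝ X] [CompleteSpace X]
    (S : Set X) (hS : S.Nonempty) (x : ℝ → X)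
    (h1 : ∀ z ∈ S, ∃ l : ℝ, Tendsto (fun t => ‖x t - z‖) atTop (nhds l))
    (h2 : ∀ (p : X) (t : ℕ → ℝ), Tendsto t atTop atTop →
      WeakConvSeq (fun n => x (t n)) p → p ∈ S) :
    ∃ p ∈ S, ∀ y : X, Tendsto (fun t => ⟪x t, y⟫) atTop (nhds ⟪p, y⟫) := by

  obtain ⟨z₀, hz₀⟩ := hS
  obtain ⟨l₀, hl₀⟩ := h1 z₀ hz₀
  obtain ⟨T, hT⟩ := eventually_atTop.mp (hl₀.eventually_lt_const (lt_add_one l₀))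
  set C := l₀ + 1 + ‖z₀‖ with hCdef
  have hbnd : ∀ s : ℝ, T ≤ s → ‖x s‖ ≤ C := by
    intro s hs
    have h3 := (hT s hs).le
    calc ‖x s‖ = ‖(x s - z₀) + z₀‖ := by rw [sub_add_cancel]
      _ ≤ ‖x s - z₀‖ + ‖z₀‖ := norm_add_le _ _
      _ ≤ C := by rw [hCdef]; linarith
  obtain ⟨p, ψ, hsψ, hwp⟩ := extract_aux x T C hbnd (fun n => (n : ℝ))
    tendsto_natCast_atTop_atTop
  have hpS : p ∈ S := h2 p _ hsψ hwp
  have huniq : ∀ q ∈ S, ∀ s : ℕ → ℝ, Tendsto s atTop atTop →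
      WeakConvSeq (fun n => x (s n)) q → q = p := by
    intro q hqS s hs hwq
    obtain ⟨a, ha⟩ := h1 p hpS
    obtain ⟨b, hb⟩ := h1 q hqS
    have hg : Tendsto (fun t => ⟪x t, p - q⟫) atTop
        (nhds ((b^2 - a^2 - ‖q‖^2 + ‖p‖^2)/2)) := by
      have h2' : Tendsto (fun t => ‖x t - q‖^2 - ‖x t - p‖^2) atTop (nhds (b^2 - a^2)) := by
        have := (hb.mul hb).sub (ha.mul ha)
        simpa [pow_two] using this
      have heq : ∀ t, 2*⟪x t, p - q⟫ + ‖q‖^2 - ‖p‖^2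
          = ‖x t - q‖^2 - ‖x t - p‖^2 := by
        intro t
        rw [norm_sub_sq_real, norm_sub_sq_real, inner_sub_right]
        ring
      have h3 : Tendsto (fun t => 2*⟪x t, p - q⟫ + ‖q‖^2 - ‖p‖^2) atTop
          (nhds (b^2 - a^2)) := by
        have hfe : (fun t => 2*⟪x t, p - q⟫ + ‖q‖^2 - ‖p‖^2)
            = fun t => ‖x t - q‖^2 - ‖x t - p‖^2 := funext heq
        rw [hfe]; exact h2'
      have h4 := ((h3.sub_const (‖q‖^2)).add_const (‖p‖^2)).div_const 2
      have hfe2 : (fun t => ⟪x t, p - q⟫)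
          = fun t => ((2*⟪x t, p - q⟫ + ‖q‖^2 - ‖p‖^2) - ‖q‖^2 + ‖p‖^2)/2 := by
        funext t; ring
      rw [hfe2]
      exact h4
    have e1 : ⟪p, p - q⟫ = (b^2 - a^2 - ‖q‖^2 + ‖p‖^2)/2 :=
      tendsto_nhds_unique (hwp (p - q)) (hg.comp hsψ)
    have e2 : ⟪q, p - q⟫ = (b^2 - a^2 - ‖q‖^2 + ‖p‖^2)/2 :=
      tendsto_nhds_unique (hwq (p - q)) (hg.comp hs)
    have hz : ⟪q - p, q - p⟫ = (0:ℝ) := by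
      rw [show q - p = -(p - q) by abel, inner_neg_neg, inner_sub_left, e1, e2]
      ring
    have := inner_self_eq_zero.mp hz
    exact sub_eq_zero.mp this
  refine ⟨p, hpS, fun y => ?_⟩
  by_contra hcon
  rw [Metric.tendsto_atTop] at hcon
  push_neg at hcon
  obtain ⟨ε, hε, hbad⟩ := hcon
  choose g hg1 hg2 using hbad
  have hgt : Tendsto (fun k : ℕ => g (k : ℝ)) atTop atTop :=
    tendsto_atTop_mono (fun k => hg1 (k : ℝ)) tendsto_natCast_atTop_atTop
  obtain ⟨q, ψ', hsψ', hwq⟩ := extract_aux x T C hbnd (fun k : ℕ => g (k : ℝ)) hgt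
  have hqp : q = p := huniq q (h2 q _ hsψ' hwq) _ hsψ' hwq
  rw [hqp] at hwq
  obtain ⟨M, hM⟩ := Metric.tendsto_atTop.mp (hwq y) ε hε
  have hlow := hg2 ((ψ' M : ℕ) : ℝ)
  have hhigh := hM M le_rfl
  exact absurd hhigh (not_lt.mpr hlow)
end

section
/- Let Y be a real Hilbert space and let a, b ∈ Y. Then ‖a − b‖ · ‖b‖ ≤ ((1 + √2)/2)(‖a‖² + ‖b‖²). Consequently, if F maps into Y, y^δ ∈ Y, and J^δ(x) = (1/2)‖F(x) − y^δ‖², then for any two points x, x₊ in the domain of F one has ‖F(x₊) − F(x)‖ · ‖F(x) − y^δ‖ ≤ (1 + √2)(J^δ(x₊) + J^δ(x)). -/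
/-- Scalar key inequality. -/
lemma key_sqrt_two_ineq (s t : ℝ) (hs : 0 ≤ s) (ht : 0 ≤ t) :
    s * t + t ^ 2 ≤ (1 + Real.sqrt 2) / 2 * (s ^ 2 + t ^ 2) := by
  have h2 : Real.sqrt 2 ^ 2 = 2 := Real.sq_sqrt (by norm_num)
  have h1 : (1 : ℝ) ≤ Real.sqrt 2 := by
    nlinarith [Real.sqrt_nonneg 2]
  nlinarith [sq_nonneg ((1 + Real.sqrt 2) * s - t), Real.sqrt_nonneg 2]

/-- Norm version. -/
lemma norm_sqrt_two_ineq {Y : Type*} [NormedAddCommGroup Y] (a b : Y) :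
    ‖a - b‖ * ‖b‖ ≤ (1 + Real.sqrt 2) / 2 * (‖a‖ ^ 2 + ‖b‖ ^ 2) := by
  have h := key_sqrt_two_ineq ‖a‖ ‖b‖ (norm_nonneg a) (norm_nonneg b)
  have h2 : ‖a - b‖ * ‖b‖ ≤ (‖a‖ + ‖b‖) * ‖b‖ :=
    mul_le_mul_of_nonneg_right (norm_sub_le a b) (norm_nonneg b)
  nlinarith

/-- The elementary Hilbert space estimate
`‖a - b‖ ‖b‖ ≤ ((1 + √2)/2)(‖a‖² + ‖b‖²)`, and its consequence for the
least-squares cost `J^δ(x) = ½‖F(x) - y^δ‖²`: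
`‖F(xp) - F(x)‖ ‖F(x) - y^δ‖ ≤ (1 + √2)(J^δ(xp) + J^δ(x))`. -/
theorem norm_mul_norm_le_sqrt_two_estimate
    {Y : Type*} [NormedAddCommGroup Y] [InnerProductSpace ℝ Y]
    {X : Type*} (a b : Y) (F : X → Y) (yδ : Y) (x xp : X) :
    ‖a - b‖ * ‖b‖ ≤ (1 + Real.sqrt 2) / 2 * (‖a‖ ^ 2 + ‖b‖ ^ 2) ∧
      ‖F xp - F x‖ * ‖F x - yδ‖ ≤
        (1 + Real.sqrt 2) *
          ((1 / 2) * ‖F xp - yδ‖ ^ 2 + (1 / 2) * ‖F x - yδ‖ ^ 2) := by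
  refine ⟨norm_sqrt_two_ineq a b, ?_⟩
  have h := norm_sqrt_two_ineq (F xp - yδ) (F x - yδ)
  have he : F xp - yδ - (F x - yδ) = F xp - F x := by abel
  rw [he] at h
  linarith
end

section
/- Let X, Y be real Hilbert spaces, M̃ ⊆ X, F : X → Y Fréchet differentiable on M̃, y^δ ∈ Y, x† ∈ M̃, c_tc ≥ 0 and κ > 0. Assume the tangential cone condition at x†: |⟨F(x†) − F(x) − F'(x)(x† − x), F(x) − y^δ⟩| ≤ c_tc ‖F(x†) − F(x)‖ · ‖F(x) − y^δ‖ for all x ∈ M̃. Then for every x ∈ M̃: ⟨F'(x)(x − x†), F(x) − y^δ⟩ ≥ (1 − c_tc − κ)‖F(x) − y^δ‖² − ((1 + c_tc)²/(4κ))‖F(x†) − y^δ‖². -/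
open RealInnerProductSpace

/-- Consequence of the tangential cone condition at `x†`: for all `x ∈ M̃`,
`⟪F'(x)(x - x†), F(x) - y^δ⟫ ≥ (1 - c_tc - κ)‖F(x) - y^δ‖² - ((1 + c_tc)²/(4κ))‖F(x†) - y^δ‖²`. -/
theorem tangential_cone_implies_gradient_condition
    {X Y : Type*} [NormedAddCommGroup X] [InnerProductSpace ℝ X]
    [NormedAddCommGroup Y] [InnerProductSpace ℝ Y]
    (Mt : Set X) (F : X → Y) (F' : X → X →L[ℝ] Y)
    (hF : ∀ x ∈ Mt, HasFDerivAt F (F' x) x)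
    (yδ : Y) (xdag : X) (hxdag : xdag ∈ Mt)
    (ctc κ : ℝ) (hctc : 0 ≤ ctc) (hκ : 0 < κ)
    (htcc : ∀ x ∈ Mt,
      |⟪F xdag - F x - F' x (xdag - x), F x - yδ⟫| ≤
        ctc * ‖F xdag - F x‖ * ‖F x - yδ‖) :
    ∀ x ∈ Mt,
      ⟪F' x (x - xdag), F x - yδ⟫ ≥
        (1 - ctc - κ) * ‖F x - yδ‖ ^ 2 -
          ((1 + ctc) ^ 2 / (4 * κ)) * ‖F xdag - yδ‖ ^ 2 := by
  intro x hx
  set v : Y := F x - yδ with hv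
  set r : Y := F xdag - F x - F' x (xdag - x) with hr
  have hdecomp : F' x (x - xdag) = (F x - F xdag) + r := by
    have : F' x (x - xdag) = - F' x (xdag - x) := by
      rw [← map_neg]; congr 1; abel
    rw [this, hr]; abel
  have hinner : ⟪F' x (x - xdag), v⟫ = ‖v‖ ^ 2 - ⟪F xdag - yδ, v⟫ + ⟪r, v⟫ := by
    rw [hdecomp, inner_add_left]
    have : F x - F xdag = v - (F xdag - yδ) := by rw [hv]; abel
    rw [this, inner_sub_left, real_inner_self_eq_norm_sq]
  have hCS : ⟪F xdag - yδ, v⟫ ≤ ‖F xdag - yδ‖ * ‖v‖ :=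
    real_inner_le_norm _ _
  have hrv : ⟪r, v⟫ ≥ -(ctc * ‖F xdag - F x‖ * ‖v‖) := by
    have := htcc x hx
    have h2 := neg_abs_le (⟪r, v⟫)
    linarith [neg_le_neg this]
  have htri : ‖F xdag - F x‖ ≤ ‖F xdag - yδ‖ + ‖v‖ := by
    have : F xdag - F x = (F xdag - yδ) - v := by rw [hv]; abel
    rw [this]; exact norm_sub_le _ _
  have ha : (0:ℝ) ≤ ‖v‖ := norm_nonneg _
  have hb : (0:ℝ) ≤ ‖F xdag - yδ‖ := norm_nonneg _
  rw [hinner]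
  set a := ‖v‖
  set b := ‖F xdag - yδ‖
  have hyoung : (1 + ctc) * a * b ≤ κ * a ^ 2 + (1 + ctc) ^ 2 / (4 * κ) * b ^ 2 := by
    have h := sq_nonneg (2 * κ * a - (1 + ctc) * b)
    have hκ4 : (0:ℝ) < 4 * κ := by linarith
    rw [ge_iff_le, div_mul_eq_mul_div, ← sub_nonneg] at *
    have : κ * a ^ 2 + (1 + ctc) ^ 2 * b ^ 2 / (4 * κ) - (1 + ctc) * a * b =
        (2 * κ * a - (1 + ctc) * b) ^ 2 / (4 * κ) := by
      field_simp; ring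
    rw [this]
    positivity
  have hrb : ⟪r, v⟫ ≥ -(ctc * (b + a) * a) := by
    have : ctc * ‖F xdag - F x‖ * a ≤ ctc * (b + a) * a := by
      apply mul_le_mul_of_nonneg_right _ ha
      exact mul_le_mul_of_nonneg_left htri hctc
    linarith
  nlinarith [hCS, hrb, hyoung]
end

section
/- Let X be a real Banach space, M̃ ⊆ X, J : X → ℝ with J ≥ 0 on M̃, let G(x_k) : X → ℝ be linear, H(x_k) : X × X → ℝ bilinear, R : X → ℝ with R ≥ 0 on M̃, α_k > 0, and let x_k, x† ∈ M̃. Assume the nonlinearity condition: there exist constants a > 0, b ≥ 0, c ≥ 0 such that G(x_k)(x₊ − x†) + (1/2)[H(x_k)(x₊ − x_k, x₊ − x_k) − H(x_k)(x_k − x†, x_k − x†)] ≥ a J(x₊) − b J(x_k) − c J(x†) for all x₊ ∈ M̃. If x_{k+1} ∈ M̃ minimizes the functional x ↦ G(x_k)(x − x_k) + (1/2)H(x_k)(x − x_k, x − x_k) + α_k R(x) over M̃, then a J(x_{k+1}) + α_k R(x_{k+1}) ≤ b J(x_k) + c J(x†) + α_k R(x†). -/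
/-- Minimality estimate for one step of the regularized Newton (SQP) method:
if `x_{k+1}` minimizes `x ↦ G(x_k)(x - x_k) + ½H(x_k)(x - x_k)² + α_k R(x)`
over `M̃` and the nonlinearity condition holds, then
`a J(x_{k+1}) + α_k R(x_{k+1}) ≤ b J(x_k) + c J(x†) + α_k R(x†)`. -/
theorem newton_step_minimality_estimate
    {X : Type*} [NormedAddCommGroup X] [NormedSpace ℝ X]
    (Mt : Set X) (J : X → ℝ) (hJnonneg : ∀ x ∈ Mt, 0 ≤ J x)
    (G : X →L[ℝ] ℝ) (H : X →L[ℝ] X →L[ℝ] ℝ)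
    (R : X → ℝ) (hRnonneg : ∀ x ∈ Mt, 0 ≤ R x)
    (αk : ℝ) (hαk : 0 < αk)
    (xk : X) (hxk : xk ∈ Mt) (xdag : X) (hxdag : xdag ∈ Mt)
    (a b c : ℝ) (ha : 0 < a) (hb : 0 ≤ b) (hc : 0 ≤ c)
    (habc : ∀ xp ∈ Mt,
      G (xp - xdag) +
          (1 / 2) * (H (xp - xk) (xp - xk) - H (xk - xdag) (xk - xdag)) ≥
        a * J xp - b * J xk - c * J xdag)
    (x1 : X) (hx1 : x1 ∈ Mt)
    (hmin : ∀ x ∈ Mt,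
      G (x1 - xk) + (1 / 2) * H (x1 - xk) (x1 - xk) + αk * R x1 ≤
        G (x - xk) + (1 / 2) * H (x - xk) (x - xk) + αk * R x) :
    a * J x1 + αk * R x1 ≤ b * J xk + c * J xdag + αk * R xdag := by
  have h1 := hmin xdag hxdag
  have h2 := habc x1 hx1
  have e1 : G (x1 - xdag) = G (x1 - xk) - G (xdag - xk) := by
    rw [← map_sub]; congr 1; abel
  have e2 : H (xk - xdag) (xk - xdag) = H (xdag - xk) (xdag - xk) := by
    have h : xk - xdag = -(xdag - xk) := by abel
    rw [h]; simp; ring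
  linarith
end

section
/- (Geometric decay of the cost in the a priori regularized Newton method) Let (J_k)_{k≥0} and (R_k)_{k≥0} be sequences of nonnegative real numbers, R† ≥ 0, η ≥ 0, α₀ > 0, a > b ≥ 0, c ≥ 0, and b/a < θ < 1. Assume the recursion J_{k+1} + (α₀/a)θ^k R_{k+1} ≤ (b/a) J_k + (α₀/a)θ^k R† + (c/a)η holds for all k ≥ 0. Then for every k ≥ 0: J_k ≤ (b/a)^k J_0 + (α₀/(aθ − b)) R† θ^k + (c/(a − b)) η. -/
/-- Geometric decay of the cost in the a priori regularized Newton method: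
from the recursion
`J_{k+1} + (α₀/a)θ^k R_{k+1} ≤ (b/a) J_k + (α₀/a)θ^k R† + (c/a)η`
one obtains `J_k ≤ (b/a)^k J_0 + (α₀/(aθ - b)) R† θ^k + (c/(a - b)) η`. -/
theorem newton_apriori_cost_decay
    (J R : ℕ → ℝ) (hJ : ∀ k, 0 ≤ J k) (hR : ∀ k, 0 ≤ R k)
    (Rdag η α₀ a b c θ : ℝ)
    (hRdag : 0 ≤ Rdag) (hη : 0 ≤ η) (hα₀ : 0 < α₀)
    (hb : 0 ≤ b) (hab : b < a) (hc : 0 ≤ c)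
    (hθ1 : b / a < θ) (hθ2 : θ < 1)
    (hrec : ∀ k : ℕ,
      J (k + 1) + (α₀ / a) * θ ^ k * R (k + 1) ≤
        (b / a) * J k + (α₀ / a) * θ ^ k * Rdag + (c / a) * η) :
    ∀ k : ℕ,
      J k ≤ (b / a) ^ k * J 0 + (α₀ / (a * θ - b)) * Rdag * θ ^ k +
        (c / (a - b)) * η := by
  have ha : 0 < a := lt_of_le_of_lt hb hab
  have hq : 0 ≤ b / a := div_nonneg hb ha.le
  have hθ0 : 0 < θ := lt_of_le_of_lt hq hθ1
  have hden1 : 0 < a * θ - b := by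
    have := (div_lt_iff₀ ha).mp hθ1
    linarith [mul_comm θ a]
  have hden2 : 0 < a - b := by linarith
  have hA : 0 ≤ (α₀ / (a * θ - b)) * Rdag := by positivity
  have hB : 0 ≤ (c / (a - b)) * η := by positivity
  intro k
  induction k with
  | zero =>
    simp only [pow_zero, one_mul, mul_one]
    linarith
  | succ k ih =>
    have h2 : J (k + 1) ≤ (b / a) * J k + (α₀ / a) * θ ^ k * Rdag + (c / a) * η := by
      have hnn : 0 ≤ (α₀ / a) * θ ^ k * R (k + 1) :=
        mul_nonneg (by positivity) (hR (k + 1))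
      linarith [hrec k]
    have h3 : (b / a) * J k ≤
        (b / a) * ((b / a) ^ k * J 0 + (α₀ / (a * θ - b)) * Rdag * θ ^ k +
          (c / (a - b)) * η) := mul_le_mul_of_nonneg_left ih hq
    have key : (b / a) * ((b / a) ^ k * J 0 + (α₀ / (a * θ - b)) * Rdag * θ ^ k +
          (c / (a - b)) * η) + (α₀ / a) * θ ^ k * Rdag + (c / a) * η =
        (b / a) ^ (k + 1) * J 0 + (α₀ / (a * θ - b)) * Rdag * θ ^ (k + 1) +
          (c / (a - b)) * η := by
      rw [div_pow, div_pow]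
      field_simp
      ring
    linarith
end

section
/- (Uniform bound on the regularization functional in the a priori regularized Newton method) Let (J_k)_{k≥0} and (R_k)_{k≥0} be sequences of nonnegative real numbers, R† ≥ 0, η ≥ 0, α₀ > 0, a > b ≥ 0, c ≥ 0, b/a < θ < 1, and τ > c/(a − b). Assume the recursion J_{k+1} + (α₀/a)θ^k R_{k+1} ≤ (b/a) J_k + (α₀/a)θ^k R† + (c/a)η holds for all k ≥ 0, and let k ≥ 0 be an index with τη ≤ J_k. Then R_{k+1} ≤ R† + ((a − b)/(τ(a − b) − c)) · ((τb + c)/α₀) · ((b/(aθ))^k J_0 + (α₀/(aθ − b)) R†), and in particular R_{k+1} ≤ (1 + ((a − b)/(τ(a − b) − c)) · ((τb + c)/(aθ − b))) R† + ((a − b)/(τ(a − b) − c)) · ((τb + c)/α₀) · J_0. -/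
set_option maxHeartbeats 1000000


/-- Uniform bound on the regularization functional in the a priori regularized
Newton method: before the discrepancy principle is triggered (`τη ≤ J_k`), the
recursion yields
`R_{k+1} ≤ R† + ((a-b)/(τ(a-b)-c))((τb+c)/α₀)((b/(aθ))^k J_0 + (α₀/(aθ-b)) R†)`,
and in particular
`R_{k+1} ≤ (1 + ((a-b)/(τ(a-b)-c))((τb+c)/(aθ-b))) R† + ((a-b)/(τ(a-b)-c))((τb+c)/α₀) J_0`. -/
theorem newton_apriori_regularization_bound
    (J R : ℕ → ℝ) (hJ : ∀ k, 0 ≤ J k) (hR : ∀ k, 0 ≤ R k)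
    (Rdag η α₀ a b c θ τ : ℝ)
    (hRdag : 0 ≤ Rdag) (hη : 0 ≤ η) (hα₀ : 0 < α₀)
    (hb : 0 ≤ b) (hab : b < a) (hc : 0 ≤ c)
    (hθ1 : b / a < θ) (hθ2 : θ < 1) (hτ : c / (a - b) < τ)
    (hrec : ∀ k : ℕ,
      J (k + 1) + (α₀ / a) * θ ^ k * R (k + 1) ≤
        (b / a) * J k + (α₀ / a) * θ ^ k * Rdag + (c / a) * η)
    (k : ℕ) (hdisc : τ * η ≤ J k) :
    R (k + 1) ≤ Rdag + ((a - b) / (τ * (a - b) - c)) * ((τ * b + c) / α₀) *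
        ((b / (a * θ)) ^ k * J 0 + (α₀ / (a * θ - b)) * Rdag) ∧
      R (k + 1) ≤
        (1 + ((a - b) / (τ * (a - b) - c)) * ((τ * b + c) / (a * θ - b))) * Rdag +
          ((a - b) / (τ * (a - b) - c)) * ((τ * b + c) / α₀) * J 0 := by
  have ha : 0 < a := lt_of_le_of_lt hb hab
  have hθ0 : 0 < θ := lt_of_le_of_lt (div_nonneg hb ha.le) hθ1
  have hba : 0 < a - b := by linarith
  have haθb : 0 < a * θ - b := by
    have := (div_lt_iff₀ ha).mp hθ1
    nlinarith
  have hτ0 : 0 < τ := lt_of_le_of_lt (div_nonneg hc hba.le) hτ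
  have hτc : 0 < τ * (a - b) - c := by
    have := (div_lt_iff₀ hba).mp hτ
    nlinarith
  have hθk : ∀ n : ℕ, (0:ℝ) < θ ^ n := fun n => pow_pos hθ0 n
  -- Step 1: induction bound on J
  have hJbound : ∀ n : ℕ,
      J n ≤ (b / a) ^ n * J 0 + α₀ * θ ^ n / (a * θ - b) * Rdag + c * η / (a - b) := by
    intro n
    induction n with
    | zero =>
      have h1 : 0 ≤ α₀ * θ ^ 0 / (a * θ - b) * Rdag :=
        mul_nonneg (div_nonneg (by positivity) haθb.le) hRdag
      have h2 : 0 ≤ c * η / (a - b) := div_nonneg (mul_nonneg hc hη) hba.le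
      have h3 : (b / a) ^ 0 * J 0 = J 0 := by norm_num
      linarith
    | succ n ih =>
      have hrecn := hrec n
      have hRpos : 0 ≤ (α₀ / a) * θ ^ n * R (n + 1) :=
        mul_nonneg (mul_nonneg (div_nonneg hα₀.le ha.le) (hθk n).le) (hR (n + 1))
      have h1 : J (n + 1) ≤ (b / a) * J n + (α₀ / a) * θ ^ n * Rdag + (c / a) * η := by
        linarith
      have h2 : J (n + 1) ≤ (b / a) * ((b / a) ^ n * J 0 + α₀ * θ ^ n / (a * θ - b) * Rdag
          + c * η / (a - b)) + (α₀ / a) * θ ^ n * Rdag + (c / a) * η := by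
        have hba' : 0 ≤ b / a := div_nonneg hb ha.le
        nlinarith [mul_le_mul_of_nonneg_left ih hba']
      calc J (n + 1) ≤ (b / a) * ((b / a) ^ n * J 0 + α₀ * θ ^ n / (a * θ - b) * Rdag
          + c * η / (a - b)) + (α₀ / a) * θ ^ n * Rdag + (c / a) * η := h2
        _ = (b / a) ^ (n + 1) * J 0 + α₀ * θ ^ (n + 1) / (a * θ - b) * Rdag
          + c * η / (a - b) := by
          rw [pow_succ, pow_succ]
          generalize (b / a) ^ n = X
          field_simp
          ring
  -- Step 2: absorb η using the discrepancy principle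
  set Q : ℝ := (b / (a * θ)) ^ k * J 0 + α₀ / (a * θ - b) * Rdag with hQdef
  have hq1 : 0 ≤ (b / (a * θ)) ^ k * J 0 :=
    mul_nonneg (pow_nonneg (div_nonneg hb (by positivity)) k) (hJ 0)
  have hq2 : 0 ≤ α₀ / (a * θ - b) * Rdag := mul_nonneg (div_nonneg hα₀.le haθb.le) hRdag
  have hQnonneg : 0 ≤ Q := by rw [hQdef]; linarith
  have hPQ : (b / a) ^ k * J 0 + α₀ * θ ^ k / (a * θ - b) * Rdag = θ ^ k * Q := by
    rw [hQdef]
    have hba' : (b / a) ^ k = θ ^ k * (b / (a * θ)) ^ k := by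
      rw [← mul_pow]
      congr 1
      field_simp
    rw [hba']
    ring
  have hJk : (τ * (a - b) - c) * J k ≤ τ * (a - b) * (θ ^ k * Q) := by
    have h1 := hJbound k
    rw [hPQ] at h1
    have h1' : (a - b) * J k ≤ (a - b) * (θ ^ k * Q) + c * η := by
      have h := mul_le_mul_of_nonneg_left h1 hba.le
      have e : (a - b) * (θ ^ k * Q + c * η / (a - b)) = (a - b) * (θ ^ k * Q) + c * η := by
        field_simp
      rw [e] at h
      exact h
    have h2 : c * (τ * η) ≤ c * J k := mul_le_mul_of_nonneg_left hdisc hc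
    nlinarith [mul_le_mul_of_nonneg_left h1' hτ0.le]
  -- Step 3: bound R (k+1) from the recursion at step k
  have hrk := hrec k
  have hmain : τ * α₀ * θ ^ k * (R (k + 1) - Rdag) ≤ (τ * b + c) * J k := by
    have hJ1 : 0 ≤ J (k + 1) := hJ (k + 1)
    have h1 : a * (J (k + 1) + (α₀ / a) * θ ^ k * R (k + 1)) ≤
        a * ((b / a) * J k + (α₀ / a) * θ ^ k * Rdag + (c / a) * η) :=
      mul_le_mul_of_nonneg_left hrk ha.le
    have ha' : a ≠ 0 := ha.ne'
    have e1 : a * (J (k + 1) + (α₀ / a) * θ ^ k * R (k + 1)) =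
        a * J (k + 1) + α₀ * θ ^ k * R (k + 1) := by
      field_simp
    have e2 : a * ((b / a) * J k + (α₀ / a) * θ ^ k * Rdag + (c / a) * η) =
        b * J k + α₀ * θ ^ k * Rdag + c * η := by
      field_simp
    have h2 : a * J (k + 1) + α₀ * θ ^ k * R (k + 1) ≤
        b * J k + α₀ * θ ^ k * Rdag + c * η := by rw [← e1, ← e2]; exact h1
    have h3 : α₀ * θ ^ k * (R (k + 1) - Rdag) ≤ b * J k + c * η := by nlinarith
    have h4 : c * (τ * η) ≤ c * J k := mul_le_mul_of_nonneg_left hdisc hc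
    nlinarith [mul_le_mul_of_nonneg_left h3 hτ0.le]
  -- combine
  have hτbc : 0 ≤ τ * b + c := by positivity
  have h7 : (τ * (a - b) - c) * (τ * α₀ * θ ^ k * (R (k + 1) - Rdag)) ≤
      (τ * b + c) * (τ * (a - b) * (θ ^ k * Q)) := by
    have h5 : (τ * b + c) * ((τ * (a - b) - c) * J k) ≤
        (τ * b + c) * (τ * (a - b) * (θ ^ k * Q)) :=
      mul_le_mul_of_nonneg_left hJk hτbc
    have h6 : (τ * (a - b) - c) * (τ * α₀ * θ ^ k * (R (k + 1) - Rdag)) ≤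
        (τ * (a - b) - c) * ((τ * b + c) * J k) :=
      mul_le_mul_of_nonneg_left hmain hτc.le
    nlinarith [h5, h6]
  have hτθ : 0 < τ * θ ^ k := mul_pos hτ0 (hθk k)
  have hkey : (τ * (a - b) - c) * (α₀ * (R (k + 1) - Rdag)) ≤ (τ * b + c) * (a - b) * Q := by
    have h7' : (τ * θ ^ k) * ((τ * (a - b) - c) * (α₀ * (R (k + 1) - Rdag))) ≤
        (τ * θ ^ k) * ((τ * b + c) * (a - b) * Q) := by
      calc (τ * θ ^ k) * ((τ * (a - b) - c) * (α₀ * (R (k + 1) - Rdag)))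
          = (τ * (a - b) - c) * (τ * α₀ * θ ^ k * (R (k + 1) - Rdag)) := by ring
        _ ≤ (τ * b + c) * (τ * (a - b) * (θ ^ k * Q)) := h7
        _ = (τ * θ ^ k) * ((τ * b + c) * (a - b) * Q) := by ring
    exact le_of_mul_le_mul_left h7' hτθ
  have hfirst : R (k + 1) ≤ Rdag +
      ((a - b) / (τ * (a - b) - c)) * ((τ * b + c) / α₀) * Q := by
    rw [← sub_le_iff_le_add']
    rw [show ((a - b) / (τ * (a - b) - c)) * ((τ * b + c) / α₀) * Q
        = ((τ * b + c) * (a - b) * Q) / ((τ * (a - b) - c) * α₀) by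
          rw [div_mul_div_comm, div_mul_eq_mul_div]; ring]
    rw [le_div_iff₀ (by positivity)]
    nlinarith [hkey]
  refine ⟨hfirst, ?_⟩
  -- second bound
  have hbase : (b / (a * θ)) ^ k ≤ 1 := by
    apply pow_le_one₀ (div_nonneg hb (by positivity))
    rw [div_le_one (by positivity)]
    linarith
  have hQle : Q ≤ J 0 + α₀ / (a * θ - b) * Rdag := by
    have h := mul_le_mul_of_nonneg_right hbase (hJ 0)
    rw [hQdef]; linarith
  have hC : 0 ≤ ((a - b) / (τ * (a - b) - c)) * ((τ * b + c) / α₀) := by positivity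
  have h8 : R (k + 1) ≤ Rdag + ((a - b) / (τ * (a - b) - c)) * ((τ * b + c) / α₀) *
      (J 0 + α₀ / (a * θ - b) * Rdag) := by
    have := mul_le_mul_of_nonneg_left hQle hC
    linarith
  have heq : Rdag + ((a - b) / (τ * (a - b) - c)) * ((τ * b + c) / α₀) *
      (J 0 + α₀ / (a * θ - b) * Rdag) =
      (1 + ((a - b) / (τ * (a - b) - c)) * ((τ * b + c) / (a * θ - b))) * Rdag +
        ((a - b) / (τ * (a - b) - c)) * ((τ * b + c) / α₀) * J 0 := by
    field_simp
    ring
  rw [← heq]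
  exact h8
end

section
/- (Geometric decay in the a posteriori regularized Newton method) Let X be a real Banach space, M̃ ⊆ X, J : X → ℝ with J ≥ 0 on M̃, G(x_k) : X → ℝ linear and H(x_k) : X × X → ℝ bilinear, and let a̲ > 0, b̲ ≥ 0, σ̄ ∈ ℝ. Assume the lower nonlinearity bound a̲ J(x₊) − b̲ J(x) ≤ G(x)(x₊ − x) + (1/2)H(x)(x₊ − x, x₊ − x) for all x, x₊ ∈ M̃. If x_k, x_{k+1} ∈ M̃ satisfy J(x_k) + G(x_k)(x_{k+1} − x_k) + (1/2)H(x_k)(x_{k+1} − x_k, x_{k+1} − x_k) ≤ σ̄ J(x_k), then J(x_{k+1}) ≤ ((σ̄ − 1 + b̲)/a̲) J(x_k). -/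
/-- Geometric decay of the cost in the a posteriori regularized Newton method:
under the lower nonlinearity bound
`a̲ J(xp) - b̲ J(x) ≤ G(x)(xp - x) + ½H(x)(xp - x)²` on `M̃`, the inexact Newton
condition `J(x_k) + G(x_k)(x_{k+1} - x_k) + ½H(x_k)(x_{k+1} - x_k)² ≤ σ̄ J(x_k)`
implies `J(x_{k+1}) ≤ ((σ̄ - 1 + b̲)/a̲) J(x_k)`. -/
theorem newton_aposteriori_geometric_decay
    {X : Type*} [NormedAddCommGroup X] [NormedSpace ℝ X]
    (Mt : Set X) (J : X → ℝ) (hJnonneg : ∀ x ∈ Mt, 0 ≤ J x)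
    (G : X → X →L[ℝ] ℝ) (H : X → X →L[ℝ] X →L[ℝ] ℝ)
    (alo blo σhi : ℝ) (halo : 0 < alo) (hblo : 0 ≤ blo)
    (hlow : ∀ x ∈ Mt, ∀ xp ∈ Mt,
      alo * J xp - blo * J x ≤
        G x (xp - x) + (1 / 2) * H x (xp - x) (xp - x))
    (xk : X) (hxk : xk ∈ Mt) (x1 : X) (hx1 : x1 ∈ Mt)
    (hstep : J xk + G xk (x1 - xk) + (1 / 2) * H xk (x1 - xk) (x1 - xk) ≤
      σhi * J xk) :
    J x1 ≤ ((σhi - 1 + blo) / alo) * J xk := by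
  have h := hlow xk hxk x1 hx1
  rw [div_mul_eq_mul_div, le_div_iff₀ halo]
  nlinarith [hJnonneg x1 hx1, hJnonneg xk hxk]
end

section
/- (Tangential cone estimate for the all-at-once groundwater filtration problem) Let (Ω, μ) be a measure space, let σ̲ ≤ σ̄ be real numbers, and let σ, σ₊ : Ω → ℝ be measurable functions with σ̲ ≤ σ(ω) ≤ σ̄ and σ̲ ≤ σ₊(ω) ≤ σ̄ for μ-a.e. ω. Let E, E₊, J, J₊, g : Ω → ℝ² be square-integrable (L²) vector fields. Then |∫_Ω (σ₊ − σ)⟨E₊ − E, σE − J⟩ dμ| ≤ (σ̄ − σ̲) ‖E₊ − E‖_{L²} ‖σE − J‖_{L²} ≤ (σ̄ − σ̲) · (‖(σ₊E₊ − J₊) − (σE − J)‖_{L²}² + ‖E₊ − E‖_{L²}²)^{1/2} · (‖σE − J‖_{L²}² + ‖E − g‖_{L²}²)^{1/2}. -/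
open MeasureTheory RealInnerProductSpace

/-- Cauchy–Schwarz for integrals of real `L²` functions. -/
lemma cs_integral {Ω : Type*} [MeasurableSpace Ω] (μ : Measure Ω) (a b : Ω → ℝ)
    (ha : MemLp a 2 μ) (hb : MemLp b 2 μ) :
    ∫ ω, a ω * b ω ∂μ ≤
      Real.sqrt (∫ ω, a ω ^ 2 ∂μ) * Real.sqrt (∫ ω, b ω ^ 2 ∂μ) := by
  set f : Lp ℝ 2 μ := ha.toLp a
  set g : Lp ℝ 2 μ := hb.toLp b
  have hfg : (inner ℝ f g : ℝ) = ∫ ω, a ω * b ω ∂μ := by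
    rw [L2.inner_def]
    refine integral_congr_ae ?_
    filter_upwards [ha.coeFn_toLp, hb.coeFn_toLp] with ω h1 h2
    simp [f, g, h1, h2, mul_comm]
  have hff : (inner ℝ f f : ℝ) = ∫ ω, a ω ^ 2 ∂μ := by
    rw [L2.inner_def]
    refine integral_congr_ae ?_
    filter_upwards [ha.coeFn_toLp] with ω h1
    simp [f, h1, sq]
  have hgg : (inner ℝ g g : ℝ) = ∫ ω, b ω ^ 2 ∂μ := by
    rw [L2.inner_def]
    refine integral_congr_ae ?_
    filter_upwards [hb.coeFn_toLp] with ω h1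
    simp [g, h1, sq]
  have hnf : ‖f‖ = Real.sqrt (∫ ω, a ω ^ 2 ∂μ) := by
    rw [@norm_eq_sqrt_real_inner, hff]
  have hng : ‖g‖ = Real.sqrt (∫ ω, b ω ^ 2 ∂μ) := by
    rw [@norm_eq_sqrt_real_inner, hgg]
  calc ∫ ω, a ω * b ω ∂μ = (inner ℝ f g : ℝ) := hfg.symm
    _ ≤ ‖f‖ * ‖g‖ := real_inner_le_norm f g
    _ = _ := by rw [hnf, hng]

lemma cs_integrable {Ω : Type*} [MeasurableSpace Ω] (μ : Measure Ω) (a b : Ω → ℝ)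
    (ha : MemLp a 2 μ) (hb : MemLp b 2 μ) :
    Integrable (fun ω => a ω * b ω) μ := by
  have := L2.integrable_inner (𝕜 := ℝ) (ha.toLp a) (hb.toLp b)
  refine this.congr ?_
  filter_upwards [ha.coeFn_toLp, hb.coeFn_toLp] with ω h1 h2
  simp [h1, h2, mul_comm]

/-- Tangential cone estimate for the all-at-once groundwater filtration
problem: for bounded coefficients `σ̲ ≤ σ, σ₊ ≤ σ̄` and square integrable
vector fields `E, E₊, J, J₊, g`,
`|∫ (σ₊ - σ)⟪E₊ - E, σE - J⟫| ≤ (σ̄ - σ̲) ‖E₊ - E‖ ‖σE - J‖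
  ≤ (σ̄ - σ̲) √(‖(σ₊E₊ - J₊) - (σE - J)‖² + ‖E₊ - E‖²) √(‖σE - J‖² + ‖E - g‖²)`,
where `‖f‖ = (∫ |f|²)^{1/2}` is the `L²(μ)` norm. -/
theorem groundwater_tangential_cone_estimate
    {Ω : Type*} [MeasurableSpace Ω] (μ : Measure Ω)
    (σlo σhi : ℝ) (hσ : σlo ≤ σhi)
    (σ σp : Ω → ℝ) (hσm : Measurable σ) (hσpm : Measurable σp)
    (hσbd : ∀ᵐ ω ∂μ, σlo ≤ σ ω ∧ σ ω ≤ σhi)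
    (hσpbd : ∀ᵐ ω ∂μ, σlo ≤ σp ω ∧ σp ω ≤ σhi)
    (E Ep Jf Jp g : Ω → EuclideanSpace ℝ (Fin 2))
    (hE : MemLp E 2 μ) (hEp : MemLp Ep 2 μ) (hJf : MemLp Jf 2 μ)
    (hJp : MemLp Jp 2 μ) (hg : MemLp g 2 μ) :
    |∫ ω, (σp ω - σ ω) * ⟪Ep ω - E ω, σ ω • E ω - Jf ω⟫ ∂μ| ≤
        (σhi - σlo) * Real.sqrt (∫ ω, ‖Ep ω - E ω‖ ^ 2 ∂μ) *
          Real.sqrt (∫ ω, ‖σ ω • E ω - Jf ω‖ ^ 2 ∂μ) ∧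
      (σhi - σlo) * Real.sqrt (∫ ω, ‖Ep ω - E ω‖ ^ 2 ∂μ) *
          Real.sqrt (∫ ω, ‖σ ω • E ω - Jf ω‖ ^ 2 ∂μ) ≤
        (σhi - σlo) *
          Real.sqrt ((∫ ω, ‖(σp ω • Ep ω - Jp ω) - (σ ω • E ω - Jf ω)‖ ^ 2 ∂μ) +
            (∫ ω, ‖Ep ω - E ω‖ ^ 2 ∂μ)) *
          Real.sqrt ((∫ ω, ‖σ ω • E ω - Jf ω‖ ^ 2 ∂μ) +
            (∫ ω, ‖E ω - g ω‖ ^ 2 ∂μ)) := by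
  have hc : 0 ≤ σhi - σlo := sub_nonneg.mpr hσ
  set u : Ω → EuclideanSpace ℝ (Fin 2) := fun ω => Ep ω - E ω with hu_def
  set v : Ω → EuclideanSpace ℝ (Fin 2) := fun ω => σ ω • E ω - Jf ω with hv_def
  have hu : MemLp u 2 μ := hEp.sub hE
  have hσtop : MemLp σ ⊤ μ := by
    refine memLp_top_of_bound hσm.aestronglyMeasurable (max |σlo| |σhi|) ?_
    filter_upwards [hσbd] with ω ⟨h1, h2⟩
    rw [Real.norm_eq_abs, abs_le]
    constructor
    · exact le_trans (neg_le_neg (le_max_left _ _)) (neg_abs_le σlo |>.trans h1)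
    · exact h2.trans ((le_abs_self σhi).trans (le_max_right _ _))
  have hσE : MemLp (fun ω => σ ω • E ω) 2 μ := hE.smul hσtop
  have hv : MemLp v 2 μ := hσE.sub hJf
  have hun : MemLp (fun ω => ‖u ω‖) 2 μ := hu.norm
  have hvn : MemLp (fun ω => ‖v ω‖) 2 μ := hv.norm
  have hInt : Integrable (fun ω => ‖u ω‖ * ‖v ω‖) μ := cs_integrable μ _ _ hun hvn
  have part1 : |∫ ω, (σp ω - σ ω) * ⟪Ep ω - E ω, σ ω • E ω - Jf ω⟫ ∂μ| ≤
      (σhi - σlo) * Real.sqrt (∫ ω, ‖Ep ω - E ω‖ ^ 2 ∂μ) *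
        Real.sqrt (∫ ω, ‖σ ω • E ω - Jf ω‖ ^ 2 ∂μ) := by
    have step1 : |∫ ω, (σp ω - σ ω) * ⟪Ep ω - E ω, σ ω • E ω - Jf ω⟫ ∂μ| ≤
        ∫ ω, |(σp ω - σ ω) * ⟪Ep ω - E ω, σ ω • E ω - Jf ω⟫| ∂μ := by
      simpa only [Real.norm_eq_abs] using
        norm_integral_le_integral_norm (fun ω => (σp ω - σ ω) * ⟪Ep ω - E ω, σ ω • E ω - Jf ω⟫) (μ := μ)
    have step2 : ∫ ω, |(σp ω - σ ω) * ⟪Ep ω - E ω, σ ω • E ω - Jf ω⟫| ∂μ ≤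
        ∫ ω, (σhi - σlo) * (‖u ω‖ * ‖v ω‖) ∂μ := by
      refine integral_mono_of_nonneg (ae_of_all μ fun ω => abs_nonneg _)
        (hInt.const_mul _) ?_
      filter_upwards [hσbd, hσpbd] with ω ⟨h1, h2⟩ ⟨h3, h4⟩
      rw [abs_mul]
      refine mul_le_mul ?_ ?_ (abs_nonneg _) hc
      · rw [abs_le]; constructor <;> linarith
      · exact (abs_real_inner_le_norm _ _)
    have step3 : ∫ ω, (σhi - σlo) * (‖u ω‖ * ‖v ω‖) ∂μ ≤
        (σhi - σlo) * (Real.sqrt (∫ ω, ‖u ω‖ ^ 2 ∂μ) * Real.sqrt (∫ ω, ‖v ω‖ ^ 2 ∂μ)) := by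
      rw [integral_const_mul]
      exact mul_le_mul_of_nonneg_left (cs_integral μ _ _ hun hvn) hc
    calc |∫ ω, (σp ω - σ ω) * ⟪Ep ω - E ω, σ ω • E ω - Jf ω⟫ ∂μ|
        ≤ ∫ ω, |(σp ω - σ ω) * ⟪Ep ω - E ω, σ ω • E ω - Jf ω⟫| ∂μ := step1
      _ ≤ ∫ ω, (σhi - σlo) * (‖u ω‖ * ‖v ω‖) ∂μ := step2
      _ ≤ (σhi - σlo) * (Real.sqrt (∫ ω, ‖u ω‖ ^ 2 ∂μ) * Real.sqrt (∫ ω, ‖v ω‖ ^ 2 ∂μ)) := step3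
      _ = _ := by rw [mul_assoc]
  refine ⟨part1, ?_⟩
  have hB : 0 ≤ ∫ ω, ‖(σp ω • Ep ω - Jp ω) - (σ ω • E ω - Jf ω)‖ ^ 2 ∂μ :=
    integral_nonneg fun ω => by positivity
  have hD : 0 ≤ ∫ ω, ‖E ω - g ω‖ ^ 2 ∂μ := integral_nonneg fun ω => by positivity
  gcongr
  · linarith
  · linarith
end
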